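/- arXiv:0708.4036 — 2 statements merged into one kernel-verified Lean document; each statement's English description precedes it below -/
import Mathlib

section
/- Call two subsets J, J' ⊆ Π with |J| = |J'| adjacent if J = J' or there exists K ⊆ Π with J ⊆ K, J' ⊆ K, |K| = |J| + 1, and Δ_J and Δ_{J'} conjugate under W_K (i.e., u(Δ_J) = Δ_{J'} for some u ∈ W_K). If I, I' ⊆ Π and there exists w ∈ W with w(Δ_I) = Δ_{I'}, then there exists a finite chain I = J₀, J₁, …, J_k = I' of subsets of Π such that J_{i−1} and J_i are adjacent for each i = 1, …, k. -/
open scoped RealInnerProductSpace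

/-- A finite reduced crystallographic root system spanning a real inner
product space `V` (whose inner product is automatically invariant under the
Weyl group, since the reflections are isometries), together with a fixed
system of positive roots and the corresponding simple roots. -/
structure RootSystemData (V : Type)
    [NormedAddCommGroup V] [InnerProductSpace ℝ V] : Type where
  roots : Finset V
  pos : Finset V
  simples : Finset V
  zero_not_mem : (0 : V) ∉ roots
  span_roots : Submodule.span ℝ (roots : Set V) = ⊤
  crystallographic : ∀ α ∈ roots, ∀ β ∈ roots,
    ∃ n : ℤ, 2 * ⟪α, β⟫ = (n : ℝ) * ⟪β, β⟫
  reduced : ∀ α ∈ roots, ∀ t : ℝ, t • α ∈ roots → t = 1 ∨ t = -1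
  reflect_mem : ∀ α ∈ roots, ∀ β ∈ roots,
    β - (2 * ⟪β, α⟫ / ⟪α, α⟫) • α ∈ roots
  pos_subset : pos ⊆ roots
  mem_pos_or_neg_mem_pos : ∀ α ∈ roots, α ∈ pos ∨ -α ∈ pos
  neg_not_pos : ∀ α ∈ pos, -α ∉ pos
  simples_subset : simples ⊆ pos
  simples_linearIndependent : LinearIndependent ℝ (fun α : simples => (α : V))
  pos_sum_of_simples : ∀ β ∈ pos, ∃ c : V →₀ ℕ,
    (c.support : Set V) ⊆ (simples : Set V) ∧ β = c.sum fun α n => (n : ℝ) • α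

namespace RootSystemData

variable {V : Type} [NormedAddCommGroup V] [InnerProductSpace ℝ V]
variable (R : RootSystemData V)

/-- `β₁ > β₂` : the difference `β₁ - β₂` is a nonempty sum of positive roots. -/
def Gt (x y : V) : Prop :=
  ∃ m : Multiset V, m ≠ 0 ∧ (∀ z ∈ m, z ∈ R.pos) ∧ x - y = m.sum

/-- `β₁ ≥ β₂` : either `β₁ > β₂` or `β₁ = β₂`. -/
def Ge (x y : V) : Prop := R.Gt x y ∨ x = y

/-- An antichain: a set of pairwise incomparable positive roots. -/
def IsRootAntichain (A : Set V) : Prop :=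
  A ⊆ (R.pos : Set V) ∧ ∀ x ∈ A, ∀ y ∈ A, x ≠ y → ¬ R.Ge x y ∧ ¬ R.Ge y x

/-- An orthogonal antichain: an antichain of pairwise orthogonal positive roots. -/
def IsOrthAntichain (A : Set V) : Prop :=
  R.IsRootAntichain A ∧ ∀ x ∈ A, ∀ y ∈ A, x ≠ y → ⟪x, y⟫ = 0

/-- The complement, inside the open dominant Weyl chamber, of the hyperplane
arrangement `⟨β,·⟩ = 1`, `β ∈ Δ⁺`. -/
def chamberSet : Set V :=
  {χ | (∀ α ∈ R.simples, 0 < ⟪α, χ⟫) ∧ ∀ β ∈ R.pos, ⟪β, χ⟫ ≠ 1}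

/-- A region: a connected component of `chamberSet`. -/
def IsRegion (F : Set V) : Prop :=
  ∃ χ ∈ R.chamberSet, F = connectedComponentIn R.chamberSet χ

/-- The positive roots `β` with `⟨β,·⟩ < 1` on `F`. -/
def ltOne (F : Set V) : Set V := {β | β ∈ R.pos ∧ ∀ χ ∈ F, ⟪β, χ⟫ < 1}

/-- The positive roots `β` with `⟨β,·⟩ > 1` on `F`. -/
def gtOne (F : Set V) : Set V := {β | β ∈ R.pos ∧ ∀ χ ∈ F, 1 < ⟪β, χ⟫}

/-- `δ(F)`: the maximal roots among the positive roots `β` with `⟨β,·⟩ < 1` on `F`. -/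
def deltaLow (F : Set V) : Set V :=
  {β | β ∈ R.ltOne F ∧ ∀ β' ∈ R.ltOne F, ¬ R.Gt β' β}

/-- `δ'(F)`: the minimal roots among the positive roots `β` with `⟨β,·⟩ > 1` on `F`. -/
def deltaHigh (F : Set V) : Set V :=
  {β | β ∈ R.gtOne F ∧ ∀ β' ∈ R.gtOne F, ¬ R.Gt β β'}

/-- Simply laced: all roots have the same length, normalized so `⟨β,β⟩ = 2`. -/
def SimplyLaced : Prop := ∀ β ∈ R.roots, ⟪β, β⟫ = 2

/-- Irreducibility: the set of roots admits no nontrivial partition into two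
mutually orthogonal parts. -/
def IsIrreducible : Prop :=
  ∀ S : Set V, S ⊆ (R.roots : Set V) →
    (∀ a ∈ S, ∀ b ∈ (R.roots : Set V) \ S, ⟪a, b⟫ = 0) →
    S = ∅ ∨ S = (R.roots : Set V)

/-- The height of a positive root: the sum of its (unique) coordinates in the
simple roots. -/
noncomputable def height (β : V) : ℕ :=
  letI := Classical.propDecidable (∃ c : V →₀ ℕ, (c.support : Set V) ⊆ (R.simples : Set V) ∧
      β = c.sum (fun α n => (n : ℝ) • α))
  if h : ∃ c : V →₀ ℕ, (c.support : Set V) ⊆ (R.simples : Set V) ∧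
      β = c.sum (fun α n => (n : ℝ) • α)
  then (Classical.choose h).sum fun _ n => n
  else 0

/-- The root system has the Cartan–Killing type given by the (simply laced)
Cartan matrix `A`: there is an indexing of the simple roots under which, in the
normalization `⟨β,β⟩ = 2`, the inner products of simple roots are the entries
of `A`. -/
def HasType {n : ℕ} (A : Matrix (Fin n) (Fin n) ℤ) : Prop :=
  ∃ e : Fin n ≃ {x // x ∈ R.simples},
    ∀ i j, ⟪((e i : V)), ((e j : V))⟫ = (A i j : ℝ)

/-- The reflections `s_β`, `β ∈ S`, as linear isometries of `V`. -/
def reflectionsOn (S : Set V) : Set (V ≃ₗᵢ[ℝ] V) :=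
  {g | ∃ β ∈ S, ∀ v, g v = v - (2 * ⟪v, β⟫ / ⟪β, β⟫) • β}

/-- The Weyl group `W`, generated by the reflections in all roots. -/
def weyl : Subgroup (V ≃ₗᵢ[ℝ] V) :=
  Subgroup.closure (reflectionsOn (R.roots : Set V))

/-- `Δ_S = Δ ∩ span_ℝ(S)`. -/
def rootsIn (S : Set V) : Set V :=
  {β | β ∈ R.roots ∧ β ∈ Submodule.span ℝ S}

/-- `Δ_S⁺ = Δ⁺ ∩ span_ℝ(S)`. -/
def posIn (S : Set V) : Set V :=
  {β | β ∈ R.pos ∧ β ∈ Submodule.span ℝ S}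

/-- The inversion set `N(w) = {β ∈ Δ⁺ : w(β) ∈ -Δ⁺}`. -/
def inversionSet (w : V ≃ₗᵢ[ℝ] V) : Set V :=
  {β | β ∈ R.pos ∧ -(w β) ∈ R.pos}

end RootSystemData

/-- The subgroup of isometries generated by the reflections `s_β`, `β ∈ S`. -/
def reflectionSubgroup {V : Type} [NormedAddCommGroup V] [InnerProductSpace ℝ V]
    (S : Set V) : Subgroup (V ≃ₗᵢ[ℝ] V) :=
  Subgroup.closure (RootSystemData.reflectionsOn S)

/-- Two subsets `J, J' ⊆ Π` of the same cardinality are adjacent if they are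
equal, or both lie in some `K ⊆ Π` with `|K| = |J| + 1` such that `Δ_J` and
`Δ_J'` are conjugate under `W_K`. -/
def AdjacentLevis {V : Type} [NormedAddCommGroup V] [InnerProductSpace ℝ V]
    (R : RootSystemData V) (J J' : Finset V) : Prop :=
  J.card = J'.card ∧
  (J = J' ∨ ∃ K : Finset V, K ⊆ R.simples ∧ J ⊆ K ∧ J' ⊆ K ∧
    K.card = J.card + 1 ∧
    ∃ u ∈ reflectionSubgroup (↑K : Set V), (⇑u) '' R.rootsIn ↑J = R.rootsIn ↑J')


variable {V : Type} [NormedAddCommGroup V] [InnerProductSpace ℝ V]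

private noncomputable def srefAux (β : V) : V →ₗ[ℝ] V :=
  LinearMap.id - ((2 / ⟪β,β⟫) • (innerSL ℝ β).toLinearMap).smulRight β

lemma srefAux_apply (β v : V) : srefAux β v = v - (2 * ⟪v,β⟫ / ⟪β,β⟫) • β := by
  simp [srefAux, real_inner_comm β v]
  ring_nf

lemma srefAux_invol (β : V) : ∀ v, srefAux β (srefAux β v) = v := by
  intro v
  rcases eq_or_ne β 0 with rfl | hβ
  · simp [srefAux_apply]
  · have hb : ⟪β,β⟫ ≠ 0 := inner_self_ne_zero.2 hβ
    rw [srefAux_apply, srefAux_apply, inner_sub_left, real_inner_smul_left]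
    rw [show ⟪v,β⟫ - 2 * ⟪v,β⟫ / ⟪β,β⟫ * ⟪β,β⟫ = -⟪v,β⟫ by field_simp; ring]
    simp only [mul_neg, neg_smul, sub_neg_eq_add, neg_div]
    abel

lemma srefAux_norm (β v : V) : ‖srefAux β v‖ = ‖v‖ := by
  rcases eq_or_ne β 0 with rfl | hβ
  · simp [srefAux_apply]
  · have hb : ⟪β,β⟫ ≠ 0 := inner_self_ne_zero.2 hβ
    have h : ⟪srefAux β v, srefAux β v⟫ = ⟪v, v⟫ := by
      simp only [srefAux_apply, inner_sub_left, inner_sub_right,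
        real_inner_smul_left, real_inner_smul_right, real_inner_comm β v]
      field_simp
      ring
    have := congrArg Real.sqrt h
    rwa [← norm_eq_sqrt_real_inner, ← norm_eq_sqrt_real_inner] at this

/-- The reflection in `β` (the identity when `β = 0`), as a linear isometry equiv. -/
noncomputable def sref (β : V) : V ≃ₗᵢ[ℝ] V :=
  LinearIsometryEquiv.mk
    (LinearEquiv.ofLinear (srefAux β) (srefAux β)
      (LinearMap.ext (srefAux_invol β)) (LinearMap.ext (srefAux_invol β)))
    (srefAux_norm β)

lemma sref_apply (β v : V) : sref β v = v - (2 * ⟪v,β⟫ / ⟪β,β⟫) • β := srefAux_apply β v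

lemma sref_sref (β v : V) : sref β (sref β v) = v := srefAux_invol β v

lemma sref_mul_self (β : V) : sref β * sref β = 1 := by
  ext v; exact sref_sref β v

lemma sref_inv (β : V) : (sref β)⁻¹ = sref β :=
  inv_eq_of_mul_eq_one_right (sref_mul_self β)

lemma sref_neg (β : V) : sref (-β) = sref β := by
  ext v; simp [sref_apply, neg_div]

lemma sref_apply_self (β : V) (hβ : β ≠ 0) : sref β β = -β := by
  have hb : ⟪β,β⟫ ≠ 0 := inner_self_ne_zero.2 hβ
  rw [sref_apply]
  rw [show 2 * ⟪β,β⟫ / ⟪β,β⟫ = 2 by field_simp]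
  module

lemma liem_mul_apply (w u : V ≃ₗᵢ[ℝ] V) (v : V) : (w * u) v = w (u v) := rfl

lemma liem_inv_apply (w : V ≃ₗᵢ[ℝ] V) (v : V) : (w⁻¹) v = w.symm v := rfl

lemma liem_inner (w : V ≃ₗᵢ[ℝ] V) (x y : V) : ⟪w x, w y⟫ = ⟪x, y⟫ :=
  w.inner_map_map x y

lemma sref_conj (w : V ≃ₗᵢ[ℝ] V) (β : V) : sref (w β) = w * sref β * w⁻¹ := by
  ext v
  rw [liem_mul_apply, liem_mul_apply, liem_inv_apply, sref_apply, sref_apply]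
  have h1 : ⟪w β, w β⟫ = ⟪β, β⟫ := liem_inner w β β
  have h2 : ⟪w.symm v, β⟫ = ⟪v, w β⟫ := by
    rw [← liem_inner w (w.symm v) β, w.apply_symm_apply]
  rw [map_sub, map_smul, w.apply_symm_apply, h1, h2]
namespace RootSystemData

variable {V : Type} [NormedAddCommGroup V] [InnerProductSpace ℝ V]
variable (R : RootSystemData V)

lemma root_ne_zero {β : V} (hβ : β ∈ R.roots) : β ≠ 0 :=
  fun h => R.zero_not_mem (h ▸ hβ)

lemma inner_self_ne {β : V} (hβ : β ∈ R.roots) : ⟪β,β⟫ ≠ 0 :=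
  inner_self_ne_zero.2 (R.root_ne_zero hβ)

lemma inner_self_pos {β : V} (hβ : β ∈ R.roots) : 0 < ⟪β,β⟫ :=
  lt_of_le_of_ne real_inner_self_nonneg (Ne.symm (R.inner_self_ne hβ))

lemma neg_mem_roots {β : V} (hβ : β ∈ R.roots) : -β ∈ R.roots := by
  have := R.reflect_mem β hβ β hβ
  have hb : ⟪β,β⟫ ≠ 0 := R.inner_self_ne hβ
  rw [show 2 * ⟪β,β⟫ / ⟪β,β⟫ = 2 by field_simp] at this
  rw [show β - (2:ℝ) • β = -β by module] at this
  exact this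

lemma pos_mem_roots {β : V} (hβ : β ∈ R.pos) : β ∈ R.roots := R.pos_subset hβ

lemma simple_mem_pos {β : V} (hβ : β ∈ R.simples) : β ∈ R.pos := R.simples_subset hβ

lemma simple_mem_roots {β : V} (hβ : β ∈ R.simples) : β ∈ R.roots :=
  R.pos_subset (R.simples_subset hβ)

lemma mem_pos_of_neg_not_pos {β : V} (hβ : β ∈ R.roots) (h : -β ∉ R.pos) : β ∈ R.pos :=
  (R.mem_pos_or_neg_mem_pos β hβ).resolve_right h

lemma sref_mem_roots {β : V} (hβ : β ∈ R.roots) {v : V} (hv : v ∈ R.roots) :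
    sref β v ∈ R.roots := by
  rw [sref_apply]; exact R.reflect_mem β hβ v hv

/-- `sref β` belongs to `reflectionsOn S` for `β ∈ S`. -/
lemma sref_mem_reflectionsOn {S : Set V} {β : V} (hβ : β ∈ S) :
    sref β ∈ reflectionsOn S :=
  ⟨β, hβ, fun v => sref_apply β v⟩

lemma eq_sref_of_mem_reflectionsOn {S : Set V} {g : V ≃ₗᵢ[ℝ] V}
    (hg : g ∈ reflectionsOn S) : ∃ β ∈ S, g = sref β := by
  obtain ⟨β, hβ, hfor⟩ := hg
  exact ⟨β, hβ, by ext v; rw [hfor v, sref_apply]⟩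

lemma reflectionsOn_mono {S T : Set V} (h : S ⊆ T) : reflectionsOn S ⊆ reflectionsOn T :=
  fun _ ⟨β, hβ, hf⟩ => ⟨β, h hβ, hf⟩

lemma reflectionSubgroup_le_weyl {S : Set V} (h : S ⊆ (R.roots : Set V)) :
    reflectionSubgroup S ≤ R.weyl :=
  Subgroup.closure_mono (reflectionsOn_mono h)

/-- Elements of a reflection subgroup preserve the roots. -/
lemma mem_roots_iff_of_mem_reflectionSubgroup {S : Set V} (hS : S ⊆ (R.roots : Set V))
    {w : V ≃ₗᵢ[ℝ] V} (hw : w ∈ reflectionSubgroup S) :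
    ∀ v, v ∈ R.roots ↔ w v ∈ R.roots := by
  induction hw using Subgroup.closure_induction with
  | mem g hg =>
    obtain ⟨β, hβ, rfl⟩ := eq_sref_of_mem_reflectionsOn hg
    intro v
    constructor
    · exact fun hv => R.sref_mem_roots (hS hβ) hv
    · intro hv
      have := R.sref_mem_roots (hS hβ) hv
      rwa [sref_sref] at this
  | one => simp
  | mul x y hx hy ihx ihy =>
    intro v
    rw [ihy v, ihx (y v)]
    exact Iff.rfl
  | inv x hx ihx =>
    intro v
    have := (ihx (x⁻¹ v)).symm
    rwa [show x (x⁻¹ v) = v from x.apply_symm_apply v] at this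

lemma weyl_mem_roots {w : V ≃ₗᵢ[ℝ] V} (hw : w ∈ R.weyl) {v : V} (hv : v ∈ R.roots) :
    w v ∈ R.roots :=
  (R.mem_roots_iff_of_mem_reflectionSubgroup (le_refl _) hw v).1 hv

/-- Elements of `W_K` preserve the span of `K`. -/
lemma mem_span_iff_of_mem_reflectionSubgroup {S : Set V}
    {w : V ≃ₗᵢ[ℝ] V} (hw : w ∈ reflectionSubgroup S) :
    ∀ v, v ∈ Submodule.span ℝ S ↔ w v ∈ Submodule.span ℝ S := by
  induction hw using Subgroup.closure_induction with
  | mem g hg =>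
    obtain ⟨β, hβ, rfl⟩ := eq_sref_of_mem_reflectionsOn hg
    have key : ∀ v ∈ Submodule.span ℝ S, sref β v ∈ Submodule.span ℝ S := by
      intro v hv
      rw [sref_apply]
      exact Submodule.sub_mem _ hv (Submodule.smul_mem _ _ (Submodule.subset_span hβ))
    intro v
    constructor
    · exact key v
    · intro hv
      have := key _ hv
      rwa [sref_sref] at this
  | one => simp
  | mul x y hx hy ihx ihy =>
    intro v
    rw [ihy v, ihx (y v)]
    exact Iff.rfl
  | inv x hx ihx =>
    intro v
    have := (ihx (x⁻¹ v)).symm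
    rwa [show x (x⁻¹ v) = v from x.apply_symm_apply v] at this


section Functionals

variable [FiniteDimensional ℝ V]

lemma simples_li : LinearIndependent ℝ ((↑) : (↑R.simples : Set V) → V) :=
  R.simples_linearIndependent

lemma simples_lio : LinearIndepOn ℝ id (↑R.simples : Set V) :=
  R.simples_linearIndependent

/-- A basis extending the simple roots. -/
noncomputable def sBasis : Module.Basis (↑(LinearIndepOn.extend (R.simples_lio) (Set.subset_univ _)) : Set V) ℝ V :=
  Module.Basis.extend (R.simples_lio)

lemma sBasis_apply_simple {γ : V} (hγ : γ ∈ R.simples) :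
    ∃ h, R.sBasis ⟨γ, h⟩ = γ := by
  have h : γ ∈ LinearIndepOn.extend (R.simples_lio) (Set.subset_univ _) :=
    LinearIndepOn.subset_extend (R.simples_lio) _ (by exact_mod_cast hγ)
  exact ⟨h, Module.Basis.extend_apply_self _ _⟩

/-- The coordinate functional of the simple root `δ`. -/
noncomputable def coeff (δ : V) : V →ₗ[ℝ] ℝ := by
  classical
  exact (R.sBasis).constr ℝ (fun i => if (i : V) = δ then (1:ℝ) else 0)

/-- The height functional, `1` on every simple root. -/
noncomputable def htf : V →ₗ[ℝ] ℝ := by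
  classical
  exact (R.sBasis).constr ℝ (fun i => if (i : V) ∈ R.simples then (1:ℝ) else 0)

lemma coeff_simple_self {δ : V} (hδ : δ ∈ R.simples) : R.coeff δ δ = 1 := by
  classical
  obtain ⟨h, hb⟩ := R.sBasis_apply_simple hδ
  have key := Module.Basis.constr_basis (R.sBasis) ℝ (fun i => if (i : V) = δ then (1:ℝ) else 0) ⟨δ, h⟩
  rw [hb] at key
  exact key.trans (if_pos rfl)

lemma coeff_simple_ne {γ : V} (hγ : γ ∈ R.simples) {δ : V} (hne : γ ≠ δ) :
    R.coeff δ γ = 0 := by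
  classical
  obtain ⟨h, hb⟩ := R.sBasis_apply_simple hγ
  have key := Module.Basis.constr_basis (R.sBasis) ℝ (fun i => if (i : V) = δ then (1:ℝ) else 0) ⟨γ, h⟩
  rw [hb] at key
  exact key.trans (if_neg hne)

lemma htf_simple {γ : V} (hγ : γ ∈ R.simples) : R.htf γ = 1 := by
  classical
  obtain ⟨h, hb⟩ := R.sBasis_apply_simple hγ
  have key := Module.Basis.constr_basis (R.sBasis) ℝ
    (fun i => if (i : V) ∈ R.simples then (1:ℝ) else 0) ⟨γ, h⟩
  rw [hb] at key
  exact key.trans (if_pos hγ)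

/-- Representation of a positive root, with coefficients given by `coeff`. -/
lemma posRep {β : V} (hβ : β ∈ R.pos) :
    ∃ c : V →₀ ℕ, (c.support : Set V) ⊆ (R.simples : Set V) ∧
      β = c.sum (fun α n => (n:ℝ) • α) ∧ ∀ δ, R.coeff δ β = (c δ : ℝ) := by
  classical
  obtain ⟨c, hsupp, hrep⟩ := R.pos_sum_of_simples β hβ
  refine ⟨c, hsupp, hrep, fun δ => ?_⟩
  rw [hrep, map_finsuppSum, Finsupp.sum]
  have : ∀ α ∈ c.support, R.coeff δ ((c α : ℝ) • α) = if α = δ then (c α : ℝ) else 0 := by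
    intro α hαs
    have hαsimple : α ∈ R.simples := hsupp hαs
    rw [map_smul, smul_eq_mul]
    by_cases h : α = δ
    · subst h; rw [if_pos rfl, R.coeff_simple_self hαsimple, mul_one]
    · rw [if_neg h, R.coeff_simple_ne hαsimple h, mul_zero]
  rw [Finset.sum_congr rfl this, Finset.sum_ite_eq' c.support δ (fun α => (c α : ℝ))]
  by_cases h : δ ∈ c.support
  · rw [if_pos h]
  · rw [if_neg h, Finsupp.notMem_support_iff.1 h, Nat.cast_zero]

lemma pos_mem_span {β : V} (hβ : β ∈ R.pos) {T : Finset V} (hsupT : R.simples ⊆ T) :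
    β ∈ Submodule.span ℝ (T : Set V) := by
  obtain ⟨c, hsupp, hrep, -⟩ := R.posRep hβ
  rw [hrep, Finsupp.sum]
  refine Submodule.sum_mem _ fun α hα => Submodule.smul_mem _ _ ?_
  exact Submodule.subset_span (by exact_mod_cast hsupT (hsupp hα))

lemma coeff_nonneg (δ : V) {β : V} (hβ : β ∈ R.pos) : 0 ≤ R.coeff δ β := by
  obtain ⟨c, -, -, hc⟩ := R.posRep hβ
  rw [hc δ]; positivity

lemma one_le_htf {β : V} (hβ : β ∈ R.pos) : 1 ≤ R.htf β := by
  classical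
  obtain ⟨c, hsupp, hrep, -⟩ := R.posRep hβ
  have hne : c.support.Nonempty := by
    rcases Finset.eq_empty_or_nonempty c.support with h | h
    · exfalso
      apply R.root_ne_zero (R.pos_mem_roots hβ)
      rw [hrep, Finsupp.sum, h, Finset.sum_empty]
    · exact h
  obtain ⟨α₀, hα₀⟩ := hne
  have hterm : ∀ α ∈ c.support, R.htf ((c α : ℝ) • α) = (c α : ℝ) := by
    intro α hα
    rw [map_smul, smul_eq_mul, R.htf_simple (hsupp hα), mul_one]
  have hsum : R.htf β = ∑ α ∈ c.support, (c α : ℝ) := by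
    rw [hrep, map_finsuppSum, Finsupp.sum, Finset.sum_congr rfl hterm]
  rw [hsum]
  calc (1:ℝ) ≤ (c α₀ : ℝ) := by
        exact_mod_cast Nat.one_le_iff_ne_zero.2 (Finsupp.mem_support_iff.1 hα₀)
    _ ≤ ∑ α ∈ c.support, (c α : ℝ) :=
        Finset.single_le_sum (f := fun α => (c α : ℝ)) (fun α _ => by positivity) hα₀

lemma htf_pos_iff {β : V} (hβ : β ∈ R.roots) : β ∈ R.pos ↔ 0 < R.htf β := by
  constructor
  · intro h; linarith [R.one_le_htf h]
  · intro h
    by_contra hneg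
    have h2 : -β ∈ R.pos := (R.mem_pos_or_neg_mem_pos β hβ).resolve_left hneg
    have := R.one_le_htf h2
    rw [map_neg] at this
    linarith

lemma coeff_eq_zero_on_span {T : Finset V} (hT : T ⊆ R.simples) {δ : V}
    (hδs : δ ∈ R.simples) (hδ : δ ∉ T) {v : V}
    (hv : v ∈ Submodule.span ℝ (T : Set V)) : R.coeff δ v = 0 := by
  have hker : Submodule.span ℝ (T : Set V) ≤ LinearMap.ker (R.coeff δ) := by
    rw [Submodule.span_le]
    intro α hα
    rw [SetLike.mem_coe, LinearMap.mem_ker]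
    exact R.coeff_simple_ne (hT hα) (fun h => hδ (h ▸ hα))
  exact LinearMap.mem_ker.1 (hker hv)

/-- Representation of a positive root lying in the span of `T ⊆ Π`. -/
lemma posRepIn {T : Finset V} (hT : T ⊆ R.simples) {β : V} (hβ : β ∈ R.pos)
    (hsp : β ∈ Submodule.span ℝ (T : Set V)) :
    ∃ c : V →₀ ℕ, (c.support : Set V) ⊆ (T : Set V) ∧
      β = c.sum (fun α n => (n:ℝ) • α) ∧ ∀ δ, R.coeff δ β = (c δ : ℝ) := by
  obtain ⟨c, hsupp, hrep, hc⟩ := R.posRep hβ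
  refine ⟨c, ?_, hrep, hc⟩
  intro α hα
  rw [Finset.mem_coe] at hα
  by_contra hαT
  have h0 : R.coeff α β = 0 :=
    R.coeff_eq_zero_on_span hT (hsupp hα) (by simpa using hαT) hsp
  rw [hc α] at h0
  exact Finsupp.mem_support_iff.1 hα (by exact_mod_cast h0)

lemma exists_inner_pos {T : Finset V} {γ : V} (hγ : γ ∈ R.pos)
    (hT : T ⊆ R.simples) (hsp : γ ∈ Submodule.span ℝ (T : Set V)) :
    ∃ α ∈ T, 0 < ⟪γ, α⟫ := by
  classical
  obtain ⟨c, hsupp, hrep, -⟩ := R.posRepIn hT hγ hsp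
  by_contra hcon
  push_neg at hcon
  have hself : 0 < ⟪γ, γ⟫ := R.inner_self_pos (R.pos_mem_roots hγ)
  have : ⟪γ, γ⟫ ≤ 0 := by
    nth_rewrite 2 [hrep]
    rw [Finsupp.sum, inner_sum]
    refine Finset.sum_nonpos fun α hα => ?_
    rw [real_inner_smul_right]
    have h1 : ⟪γ, α⟫ ≤ 0 := hcon α (by exact_mod_cast hsupp hα)
    have h2 : (0:ℝ) ≤ (c α : ℝ) := by positivity
    exact mul_nonpos_of_nonneg_of_nonpos h2 h1
  linarith

/-- The reflection coefficient `2⟪β,α⟫/⟪α,α⟫` is a positive integer when `⟪β,α⟫ > 0`. -/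
lemma coeff_int_ge_one {β α : V} (hβ : β ∈ R.roots) (hα : α ∈ R.roots)
    (hpos : 0 < ⟪β,α⟫) : 1 ≤ 2 * ⟪β,α⟫ / ⟪α,α⟫ := by
  obtain ⟨n, hn⟩ := R.crystallographic β hβ α hα
  have hαα : 0 < ⟪α,α⟫ := R.inner_self_pos hα
  have hc : 2 * ⟪β,α⟫ / ⟪α,α⟫ = (n:ℝ) := by
    rw [div_eq_iff hαα.ne', hn]
  rw [hc]
  have : (0:ℝ) < n := by
    rw [← hc]; positivity
  exact_mod_cast this

/-- Key fact: a simple reflection permutes the positive roots other than the simple root. -/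
lemma sref_simple_mem_pos {α : V} (hα : α ∈ R.simples) {β : V} (hβ : β ∈ R.pos)
    (hne : β ≠ α) : sref α β ∈ R.pos := by
  classical
  have hβr : β ∈ R.roots := R.pos_mem_roots hβ
  have hαr : α ∈ R.roots := R.simple_mem_roots hα
  have hsr : sref α β ∈ R.roots := R.sref_mem_roots hαr hβr
  obtain ⟨c, hsupp, hrep, hc⟩ := R.posRep hβ
  -- find a simple root γ ≠ α in the support of β
  have hγ : ∃ γ ∈ c.support, γ ≠ α := by
    by_contra hcon
    push_neg at hcon
    have hsne : c.support.Nonempty := by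
      rcases Finset.eq_empty_or_nonempty c.support with h | h
      · exfalso
        apply R.root_ne_zero hβr
        rw [hrep, Finsupp.sum, h, Finset.sum_empty]
      · exact h
    have hseq : c.support = {α} := by
      obtain ⟨x, hx⟩ := hsne
      have hxα : x = α := hcon x hx
      apply Finset.eq_singleton_iff_unique_mem.2
      exact ⟨hxα ▸ hx, fun y hy => hcon y hy⟩
    have hβα : β = (c α : ℝ) • α := by
      rw [hrep, Finsupp.sum, hseq, Finset.sum_singleton]
    have := R.reduced α hαr (c α : ℝ) (by rw [← hβα]; exact hβr)
    rcases this with h1 | h1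
    · exact hne (by rw [hβα, h1, one_smul])
    · have : (0:ℝ) ≤ (c α : ℝ) := by positivity
      rw [h1] at this; linarith
  obtain ⟨γ, hγs, hγα⟩ := hγ
  have hγsimple : γ ∈ R.simples := hsupp hγs
  have hcγpos : (0:ℝ) < R.coeff γ β := by
    rw [hc γ]
    exact_mod_cast Nat.pos_of_ne_zero (Finsupp.mem_support_iff.1 hγs)
  have hkey : R.coeff γ (sref α β) = R.coeff γ β := by
    rw [sref_apply, map_sub, map_smul, smul_eq_mul,
      R.coeff_simple_ne hα (Ne.symm hγα), mul_zero, sub_zero]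
  rcases R.mem_pos_or_neg_mem_pos _ hsr with h | h
  · exact h
  · exfalso
    have := R.coeff_nonneg γ h
    rw [map_neg] at this
    rw [hkey] at this
    linarith

/-- If `w` sends every element of `T` to a positive root, it sends every positive
root in the span of `T` to a positive root. -/
lemma weyl_pos_of_simples_pos {T : Finset V} (hT : T ⊆ R.simples)
    {w : V ≃ₗᵢ[ℝ] V} (hw : ∀ v ∈ R.roots, w v ∈ R.roots)
    (hmaps : ∀ β ∈ T, w β ∈ R.pos) :
    ∀ γ ∈ R.pos, γ ∈ Submodule.span ℝ (T : Set V) → w γ ∈ R.pos := by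
  classical
  suffices key : ∀ n : ℕ, ∀ γ ∈ R.pos, γ ∈ Submodule.span ℝ (T : Set V) →
      R.htf γ ≤ n → w γ ∈ R.pos by
    intro γ hγ hsp
    obtain ⟨n, hn⟩ := exists_nat_ge (R.htf γ)
    exact key n γ hγ hsp hn
  intro n
  induction n with
  | zero =>
    intro γ hγ _ hle
    have := R.one_le_htf hγ
    norm_num at hle
    linarith
  | succ n ih =>
    intro γ hγ hsp hle
    obtain ⟨α, hαT, hαpos⟩ := R.exists_inner_pos hγ hT hsp
    by_cases hγα : γ = α
    · subst hγα; exact hmaps γ hαT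
    · -- reflect to a shorter positive root
      have hαs : α ∈ R.simples := hT hαT
      have hαr : α ∈ R.roots := R.simple_mem_roots hαs
      have hγr : γ ∈ R.roots := R.pos_mem_roots hγ
      set cr := 2 * ⟪γ,α⟫ / ⟪α,α⟫ with hcr
      have hcr1 : 1 ≤ cr := R.coeff_int_ge_one hγr hαr hαpos
      have hγ' : sref α γ ∈ R.pos := R.sref_simple_mem_pos hαs hγ hγα
      have hsp' : sref α γ ∈ Submodule.span ℝ (T : Set V) := by
        rw [sref_apply]
        exact Submodule.sub_mem _ hsp
          (Submodule.smul_mem _ _ (Submodule.subset_span (by exact_mod_cast hαT)))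
      have hht : R.htf (sref α γ) = R.htf γ - cr := by
        rw [sref_apply, map_sub, map_smul, smul_eq_mul, R.htf_simple hαs, mul_one]
      have hle' : R.htf (sref α γ) ≤ n := by
        rw [hht]; push_cast at hle ⊢; linarith
      have hw' : w (sref α γ) ∈ R.pos := ih _ hγ' hsp' hle'
      -- now w γ = w (sref α γ) + cr • w α
      have hdec : w γ = w (sref α γ) + cr • (w α) := by
        rw [sref_apply, map_sub, map_smul]
        abel
      have hwγr : w γ ∈ R.roots := hw γ hγr
      rw [R.htf_pos_iff hwγr, hdec, map_add, map_smul, smul_eq_mul]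
      have h1 := R.one_le_htf hw'
      have h2 := R.one_le_htf (hmaps α hαT)
      nlinarith

open Classical in
/-- The inversion set as a finset. -/
noncomputable def invFS (w : V ≃ₗᵢ[ℝ] V) : Finset V :=
  R.pos.filter (fun β => -(w β) ∈ R.pos)

/-- The number of inversions of `w`. -/
noncomputable def nlen (w : V ≃ₗᵢ[ℝ] V) : ℕ := (R.invFS w).card

lemma mem_invFS {w : V ≃ₗᵢ[ℝ] V} {β : V} :
    β ∈ R.invFS w ↔ β ∈ R.pos ∧ -(w β) ∈ R.pos := by
  classical
  rw [invFS]
  convert Finset.mem_filter using 2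

lemma sref_apply_simple_self {α : V} (hα : α ∈ R.simples) : sref α α = -α :=
  sref_apply_self α (R.root_ne_zero (R.simple_mem_roots hα))

open Classical in
lemma invFS_mul_sref_erase {α : V} (hα : α ∈ R.simples) (w : V ≃ₗᵢ[ℝ] V) :
    (R.invFS (w * sref α)).erase α = ((R.invFS w).erase α).image (sref α) := by
  classical
  ext β
  simp only [Finset.mem_erase, Finset.mem_image, R.mem_invFS]
  constructor
  · rintro ⟨hβα, hβp, hβw⟩
    refine ⟨sref α β, ⟨?_, ?_, ?_⟩, sref_sref α β⟩
    · intro h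
      apply R.neg_not_pos α (R.simple_mem_pos hα)
      have : β = -α := by
        rw [← sref_sref α β, h, R.sref_apply_simple_self hα]
      rwa [this] at hβp
    · exact R.sref_simple_mem_pos hα hβp hβα
    · exact hβw
  · rintro ⟨γ, ⟨hγα, hγp, hγw⟩, rfl⟩
    have h1 : sref α γ ∈ R.pos := R.sref_simple_mem_pos hα hγp hγα
    refine ⟨?_, h1, ?_⟩
    · intro h
      apply R.neg_not_pos α (R.simple_mem_pos hα)
      have : γ = -α := by
        rw [← sref_sref α γ, h, R.sref_apply_simple_self hα]
      rwa [this] at hγp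
    · show -(w (sref α (sref α γ))) ∈ R.pos
      rwa [sref_sref]

lemma nlen_mul_sref_of_pos {α : V} (hα : α ∈ R.simples) {w : V ≃ₗᵢ[ℝ] V}
    (hpos : w α ∈ R.pos) : R.nlen (w * sref α) = R.nlen w + 1 := by
  classical
  have hαB : α ∈ R.invFS (w * sref α) := by
    rw [R.mem_invFS]
    refine ⟨R.simple_mem_pos hα, ?_⟩
    show -(w (sref α α)) ∈ R.pos
    rw [R.sref_apply_simple_self hα, map_neg, neg_neg]
    exact hpos
  have hαA : α ∉ R.invFS w := by
    rw [R.mem_invFS]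
    rintro ⟨-, h⟩
    exact R.neg_not_pos _ hpos h
  have herase := R.invFS_mul_sref_erase hα w
  have hcard : ((R.invFS w).erase α).card = (R.invFS w).card := by
    rw [Finset.erase_eq_of_notMem hαA]
  have hinj : Function.Injective (⇑(sref α)) := (sref α).injective
  calc R.nlen (w * sref α) = ((R.invFS (w * sref α)).erase α).card + 1 :=
        (Finset.card_erase_add_one hαB).symm
    _ = (((R.invFS w).erase α).image (sref α)).card + 1 := by rw [herase]
    _ = ((R.invFS w).erase α).card + 1 := by rw [Finset.card_image_of_injective _ hinj]
    _ = R.nlen w + 1 := by rw [hcard]; rfl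

lemma nlen_mul_sref_of_neg {α : V} (hα : α ∈ R.simples) {w : V ≃ₗᵢ[ℝ] V}
    (hneg : -(w α) ∈ R.pos) : R.nlen (w * sref α) + 1 = R.nlen w := by
  classical
  have hαB : α ∉ R.invFS (w * sref α) := by
    rw [R.mem_invFS]
    rintro ⟨-, h⟩
    rw [show (w * sref α) α = w (sref α α) from rfl, R.sref_apply_simple_self hα,
      map_neg, neg_neg] at h
    exact R.neg_not_pos _ h hneg
  have hαA : α ∈ R.invFS w := R.mem_invFS.2 ⟨R.simple_mem_pos hα, hneg⟩
  have herase := R.invFS_mul_sref_erase hα w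
  have hinj : Function.Injective (⇑(sref α)) := (sref α).injective
  calc R.nlen (w * sref α) + 1 = ((R.invFS (w * sref α)).erase α).card + 1 := by
        rw [Finset.erase_eq_of_notMem hαB]; rfl
    _ = (((R.invFS w).erase α).image (sref α)).card + 1 := by rw [herase]
    _ = ((R.invFS w).erase α).card + 1 := by rw [Finset.card_image_of_injective _ hinj]
    _ = R.nlen w := Finset.card_erase_add_one hαA

/-- If `w` has an inversion, it sends some simple root to a negative root. -/
lemma exists_simple_neg {w : V ≃ₗᵢ[ℝ] V} (hw : ∀ v ∈ R.roots, w v ∈ R.roots)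
    (hn : R.nlen w ≠ 0) : ∃ α ∈ R.simples, -(w α) ∈ R.pos := by
  by_contra hcon
  push_neg at hcon
  have hmaps : ∀ β ∈ R.simples, w β ∈ R.pos := fun β hβ =>
    R.mem_pos_of_neg_not_pos (hw β (R.simple_mem_roots hβ)) (hcon β hβ)
  apply hn
  rw [nlen, Finset.card_eq_zero]
  by_contra hne
  obtain ⟨β, hβ⟩ := Finset.nonempty_of_ne_empty hne
  rw [R.mem_invFS] at hβ
  have := R.weyl_pos_of_simples_pos subset_rfl hw hmaps β hβ.1
    (R.pos_mem_span hβ.1 subset_rfl)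
  exact R.neg_not_pos _ this hβ.2

end Functionals

end RootSystemData

/-- Product of the reflections in the elements of the list `L`. -/
noncomputable def sprod {V : Type} [NormedAddCommGroup V] [InnerProductSpace ℝ V]
    (L : List V) : V ≃ₗᵢ[ℝ] V := (L.map sref).prod

lemma sprod_nil {V : Type} [NormedAddCommGroup V] [InnerProductSpace ℝ V] :
    sprod ([] : List V) = 1 := rfl

lemma sprod_cons {V : Type} [NormedAddCommGroup V] [InnerProductSpace ℝ V]
    (β : V) (L : List V) : sprod (β :: L) = sref β * sprod L := by
  rw [sprod, sprod, List.map_cons, List.prod_cons]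

lemma sprod_append {V : Type} [NormedAddCommGroup V] [InnerProductSpace ℝ V]
    (L M : List V) : sprod (L ++ M) = sprod L * sprod M := by
  rw [sprod, sprod, sprod, List.map_append, List.prod_append]

namespace RootSystemData

variable {V : Type} [NormedAddCommGroup V] [InnerProductSpace ℝ V]
variable (R : RootSystemData V)

lemma sprod_mem_roots {L : List V} (hL : ∀ β ∈ L, β ∈ R.roots) {v : V}
    (hv : v ∈ R.roots) : sprod L v ∈ R.roots := by
  induction L with
  | nil => exact hv
  | cons β T ih =>
    rw [sprod_cons]
    have hT : sprod T v ∈ R.roots := ih (fun γ hγ => hL γ (List.mem_cons_of_mem β hγ))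
    exact R.sref_mem_roots (hL β (List.mem_cons_self)) hT

section FD

variable [FiniteDimensional ℝ V]

set_option linter.unusedSectionVars false

lemma sref_mem_simple_closure {β : V} (hβ : β ∈ R.pos) :
    sref β ∈ Subgroup.closure (reflectionsOn (R.simples : Set V)) := by
  suffices key : ∀ n : ℕ, ∀ β ∈ R.pos, R.htf β ≤ n →
      sref β ∈ Subgroup.closure (reflectionsOn (R.simples : Set V)) by
    obtain ⟨n, hn⟩ := exists_nat_ge (R.htf β)
    exact key n β hβ hn
  intro n
  induction n with
  | zero =>
    intro β hβ hle
    have := R.one_le_htf hβ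
    norm_num at hle
    linarith
  | succ n ih =>
    intro β hβ hle
    obtain ⟨α, hαs, hαpos⟩ := R.exists_inner_pos hβ subset_rfl (R.pos_mem_span hβ subset_rfl)
    by_cases hβα : β = α
    · subst hβα
      exact Subgroup.subset_closure (sref_mem_reflectionsOn (by exact_mod_cast hαs))
    · have hαr : α ∈ R.roots := R.simple_mem_roots hαs
      have hβr : β ∈ R.roots := R.pos_mem_roots hβ
      have hcr1 : 1 ≤ 2 * ⟪β,α⟫ / ⟪α,α⟫ := R.coeff_int_ge_one hβr hαr hαpos
      have hβ' : sref α β ∈ R.pos := R.sref_simple_mem_pos hαs hβ hβα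
      have hht : R.htf (sref α β) = R.htf β - 2 * ⟪β,α⟫ / ⟪α,α⟫ := by
        rw [sref_apply, map_sub, map_smul, smul_eq_mul, R.htf_simple hαs, mul_one]
      have hle' : R.htf (sref α β) ≤ n := by
        rw [hht]; push_cast at hle ⊢; linarith
      have hIH : sref (sref α β) ∈ Subgroup.closure (reflectionsOn (R.simples : Set V)) :=
        ih _ hβ' hle'
      have hαmem : sref α ∈ Subgroup.closure (reflectionsOn (R.simples : Set V)) :=
        Subgroup.subset_closure (sref_mem_reflectionsOn (by exact_mod_cast hαs))
      have hconj : sref β = sref α * sref (sref α β) * (sref α)⁻¹ := by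
        rw [← sref_conj (sref α) (sref α β), sref_sref]
      rw [hconj]
      exact Subgroup.mul_mem _ (Subgroup.mul_mem _ hαmem hIH) (Subgroup.inv_mem _ hαmem)

lemma weyl_le_simple_closure :
    R.weyl ≤ Subgroup.closure (reflectionsOn (R.simples : Set V)) := by
  rw [weyl, Subgroup.closure_le]
  intro g hg
  obtain ⟨β, hβ, rfl⟩ := eq_sref_of_mem_reflectionsOn hg
  rw [Finset.mem_coe] at hβ
  rcases R.mem_pos_or_neg_mem_pos β hβ with h | h
  · exact R.sref_mem_simple_closure h
  · rw [SetLike.mem_coe, ← sref_neg β]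
    exact R.sref_mem_simple_closure h

lemma exists_word {w : V ≃ₗᵢ[ℝ] V} (hw : w ∈ R.weyl) :
    ∃ L : List V, (∀ β ∈ L, β ∈ R.simples) ∧ w = sprod L := by
  have hw' : w ∈ Subgroup.closure (reflectionsOn (R.simples : Set V)) :=
    R.weyl_le_simple_closure hw
  clear hw
  induction hw' using Subgroup.closure_induction'' with
  | mem g hg =>
    obtain ⟨β, hβ, rfl⟩ := eq_sref_of_mem_reflectionsOn hg
    exact ⟨[β], by simpa using hβ, by rw [sprod_cons, sprod_nil, mul_one]⟩
  | inv_mem g hg =>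
    obtain ⟨β, hβ, rfl⟩ := eq_sref_of_mem_reflectionsOn hg
    refine ⟨[β], by simpa using hβ, ?_⟩
    rw [sprod_cons, sprod_nil, mul_one, sref_inv]
  | one => exact ⟨[], by simp, by rw [sprod_nil]⟩
  | mul x y hx hy ihx ihy =>
    obtain ⟨L₁, hL₁, rfl⟩ := ihx
    obtain ⟨L₂, hL₂, rfl⟩ := ihy
    refine ⟨L₁ ++ L₂, ?_, by rw [sprod_append]⟩
    intro β hβ
    rcases List.mem_append.1 hβ with h | h
    · exact hL₁ β h
    · exact hL₂ β h

/-- The exchange lemma. -/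
lemma exchange : ∀ L : List V, (∀ β ∈ L, β ∈ R.simples) → ∀ α, α ∈ R.simples →
    -(sprod L α) ∈ R.pos → ∃ L' : List V, (∀ β ∈ L', β ∈ R.simples) ∧
      L'.length + 1 = L.length ∧ sprod L' = sprod L * sref α := by
  intro L
  induction L with
  | nil =>
    intro _ α hα hneg
    exfalso
    rw [sprod_nil] at hneg
    exact R.neg_not_pos α (R.simple_mem_pos hα) hneg
  | cons β T ih =>
    intro hL α hα hneg
    have hβs : β ∈ R.simples := hL β (List.mem_cons_self)
    have hTs : ∀ γ ∈ T, γ ∈ R.simples := fun γ hγ => hL γ (List.mem_cons_of_mem β hγ)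
    have hvαr : sprod T α ∈ R.roots :=
      R.sprod_mem_roots (fun γ hγ => R.simple_mem_roots (hTs γ hγ)) (R.simple_mem_roots hα)
    rw [sprod_cons] at hneg
    rcases R.mem_pos_or_neg_mem_pos _ hvαr with hvp | hvn
    · -- sprod T α positive: must equal β
      have hvβ : sprod T α = β := by
        by_contra hne
        have := R.sref_simple_mem_pos hβs hvp hne
        exact R.neg_not_pos _ this (by exact hneg)
      refine ⟨T, hTs, by simp, ?_⟩
      have hconj : sref β * sprod T = sprod T * sref α := by
        rw [← hvβ, sref_conj (sprod T) α]
        group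
      rw [sprod_cons, hconj, mul_assoc, sref_mul_self, mul_one]
    · -- induction
      obtain ⟨T', hT's, hlen, hT'⟩ := ih hTs α hα hvn
      refine ⟨β :: T', ?_, ?_, ?_⟩
      · intro γ hγ
        rcases List.mem_cons.1 hγ with rfl | h
        · exact hβs
        · exact hT's γ h
      · simp [← hlen]
      · rw [sprod_cons, sprod_cons, hT', mul_assoc]

/-- An element of the Weyl group with no inversions is the identity. -/
lemma eq_one_of_nlen_zero {w : V ≃ₗᵢ[ℝ] V} (hw : w ∈ R.weyl) (hn : R.nlen w = 0) :
    w = 1 := by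
  have hNoInv : ∀ β ∈ R.pos, ¬(-(w β) ∈ R.pos) := by
    intro β hβ hcon
    have : β ∈ R.invFS w := R.mem_invFS.2 ⟨hβ, hcon⟩
    rw [nlen, Finset.card_eq_zero] at hn
    rw [hn] at this
    exact absurd this (Finset.notMem_empty β)
  set S : Set ℕ := {n | ∃ L : List V, (∀ β ∈ L, β ∈ R.simples) ∧ L.length = n ∧ w = sprod L}
  have hSne : S.Nonempty := by
    obtain ⟨L, hLs, hLw⟩ := R.exists_word hw
    exact ⟨L.length, L, hLs, rfl, hLw⟩
  obtain ⟨L, hLs, hLlen, hLw⟩ := Nat.sInf_mem hSne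
  rcases List.eq_nil_or_concat L with rfl | ⟨M, α, rfl⟩
  · rw [hLw, sprod_nil]
  · exfalso
    have hαs : α ∈ R.simples := hLs α (by simp)
    have hMs : ∀ β ∈ M, β ∈ R.simples := fun β hβ => hLs β (by simp [hβ])
    have hw_eq : w = sprod M * sref α := by
      rw [hLw, List.concat_eq_append, sprod_append, sprod_cons, sprod_nil, mul_one]
    have hvαr : sprod M α ∈ R.roots :=
      R.sprod_mem_roots (fun γ hγ => R.simple_mem_roots (hMs γ hγ)) (R.simple_mem_roots hαs)
    have hwα : w α = -(sprod M α) := by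
      rw [hw_eq, liem_mul_apply, R.sref_apply_simple_self hαs, map_neg]
    rcases R.mem_pos_or_neg_mem_pos _ hvαr with hvp | hvn
    · -- w α is negative: contradiction with no inversions
      apply hNoInv α (R.simple_mem_pos hαs)
      rw [hwα, neg_neg]
      exact hvp
    · -- exchange: shorter word for w
      obtain ⟨M', hM's, hM'len, hM'⟩ := R.exchange M hMs α hαs hvn
      have hM'w : w = sprod M' := by
        rw [hM', hw_eq]
      have hle : sInf S ≤ M'.length := Nat.sInf_le ⟨M', hM's, rfl, hM'w⟩
      have hcc : (M.concat α).length = M.length + 1 := by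
        rw [List.concat_eq_append, List.length_append, List.length_cons, List.length_nil]
      omega

lemma liem_span_image (g : V ≃ₗᵢ[ℝ] V) (s : Set V) {v : V}
    (hv : v ∈ Submodule.span ℝ s) : g v ∈ Submodule.span ℝ (⇑g '' s) := by
  induction hv using Submodule.span_induction with
  | mem x hx => exact Submodule.subset_span ⟨x, hx, rfl⟩
  | zero => rw [map_zero]; exact Submodule.zero_mem _
  | add x y hx hy ihx ihy => rw [map_add]; exact Submodule.add_mem _ ihx ihy
  | smul a x hx ihx => rw [map_smul]; exact Submodule.smul_mem _ a ihx

/-- If `β` is positive, in the span of `T ⊆ Π`, `w` maps `T` into `Δ⁺`, and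
`w β` has height at most `1`, then `β ∈ T`. -/
lemma simple_preimage {T : Finset V} (hT : T ⊆ R.simples) {β : V} (hβp : β ∈ R.pos)
    (hsp : β ∈ Submodule.span ℝ (T : Set V)) {w : V ≃ₗᵢ[ℝ] V}
    (h5 : ∀ δ ∈ T, w δ ∈ R.pos) (h6 : R.htf (w β) ≤ 1) : β ∈ T := by
  classical
  obtain ⟨c, hsupp, hrep, -⟩ := R.posRepIn hT hβp hsp
  have hsne : c.support.Nonempty := by
    rcases Finset.eq_empty_or_nonempty c.support with h | h
    · exfalso
      apply R.root_ne_zero (R.pos_mem_roots hβp)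
      rw [hrep, Finsupp.sum, h, Finset.sum_empty]
    · exact h
  obtain ⟨α₀, hα₀⟩ := hsne
  have hwrep : w β = ∑ α ∈ c.support, (c α : ℝ) • (w α) := by
    rw [hrep, Finsupp.sum, map_sum]
    exact Finset.sum_congr rfl fun α _ => by rw [map_smul]
  have hsumle : (∑ α ∈ c.support, (c α : ℝ)) ≤ R.htf (w β) := by
    rw [hwrep, map_sum]
    refine Finset.sum_le_sum fun α hα => ?_
    rw [map_smul, smul_eq_mul]
    have h1 : 1 ≤ R.htf (w α) := R.one_le_htf (h5 α (by exact_mod_cast hsupp hα))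
    have h2 : (0:ℝ) ≤ (c α : ℝ) := by positivity
    nlinarith
  have hSn : (∑ α ∈ c.support, c α) = 1 := by
    have hge : 1 ≤ ∑ α ∈ c.support, c α := by
      calc 1 ≤ c α₀ := Nat.one_le_iff_ne_zero.2 (Finsupp.mem_support_iff.1 hα₀)
        _ ≤ ∑ α ∈ c.support, c α := Finset.single_le_sum (fun _ _ => Nat.zero_le _) hα₀
    have hle : (∑ α ∈ c.support, c α) ≤ 1 := by
      have : ((∑ α ∈ c.support, c α : ℕ) : ℝ) ≤ 1 := by
        push_cast
        linarith
      exact_mod_cast this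
    omega
  have herase : c.support.erase α₀ = ∅ := by
    by_contra h
    obtain ⟨γ, hγ⟩ := Finset.nonempty_of_ne_empty h
    have hγs : γ ∈ c.support := Finset.mem_of_mem_erase hγ
    have h1 : 1 ≤ c γ := Nat.one_le_iff_ne_zero.2 (Finsupp.mem_support_iff.1 hγs)
    have h2 : c γ ≤ ∑ α ∈ c.support.erase α₀, c α :=
      Finset.single_le_sum (fun _ _ => Nat.zero_le _) hγ
    have h3 : c α₀ + ∑ α ∈ c.support.erase α₀, c α = ∑ α ∈ c.support, c α :=
      Finset.add_sum_erase _ _ hα₀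
    have h4 : 1 ≤ c α₀ := Nat.one_le_iff_ne_zero.2 (Finsupp.mem_support_iff.1 hα₀)
    omega
  have hsingle : c.support = {α₀} := by
    refine Finset.eq_singleton_iff_unique_mem.2 ⟨hα₀, fun y hy => ?_⟩
    by_contra hne
    have : y ∈ c.support.erase α₀ := Finset.mem_erase.2 ⟨hne, hy⟩
    rw [herase] at this
    exact absurd this (Finset.notMem_empty y)

  have hcα₀ : c α₀ = 1 := by
    rw [hsingle, Finset.sum_singleton] at hSn
    exact hSn
  have hβα₀ : β = α₀ := by
    rw [hrep, Finsupp.sum, hsingle, Finset.sum_singleton, hcα₀, Nat.cast_one, one_smul]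
  rw [hβα₀]
  have : α₀ ∈ (T : Set V) := hsupp (by exact_mod_cast hα₀)
  exact_mod_cast this

lemma span_rootsIn {J : Finset V} (hJ : J ⊆ R.simples) :
    Submodule.span ℝ (R.rootsIn (J : Set V)) = Submodule.span ℝ (J : Set V) := by
  apply le_antisymm
  · rw [Submodule.span_le]
    exact fun x hx => hx.2
  · rw [Submodule.span_le]
    intro α hα
    exact Submodule.subset_span ⟨R.simple_mem_roots (hJ (by exact_mod_cast hα)),
      Submodule.subset_span hα⟩

lemma card_eq_of_image_rootsIn {J J' : Finset V} (hJ : J ⊆ R.simples)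
    (hJ' : J' ⊆ R.simples) (w : V ≃ₗᵢ[ℝ] V)
    (hmap : (⇑w) '' R.rootsIn ↑J = R.rootsIn ↑J') : J.card = J'.card := by
  have hliJ : LinearIndependent ℝ ((↑) : (↑J : Set V) → V) :=
    (R.simples_lio).mono (by exact_mod_cast hJ)
  have hliJ' : LinearIndependent ℝ ((↑) : (↑J' : Set V) → V) :=
    (R.simples_lio).mono (by exact_mod_cast hJ')
  have h1 : Module.finrank ℝ (Submodule.span ℝ (J : Set V)) = J.card :=
    finrank_span_finset_eq_card hliJ
  have h2 : Module.finrank ℝ (Submodule.span ℝ (J' : Set V)) = J'.card :=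
    finrank_span_finset_eq_card hliJ'
  have himg : Submodule.span ℝ ((⇑w) '' R.rootsIn ↑J) =
      Submodule.map (w.toLinearEquiv : V →ₗ[ℝ] V) (Submodule.span ℝ (R.rootsIn ↑J)) := by
    rw [show ⇑w = ⇑(w.toLinearEquiv : V →ₗ[ℝ] V) from rfl, Submodule.span_image]
  have hrank := LinearEquiv.finrank_map_eq (w.toLinearEquiv) (Submodule.span ℝ (R.rootsIn (J : Set V)))
  rw [← h1, ← h2, ← R.span_rootsIn hJ, ← R.span_rootsIn hJ', ← hmap, himg]
  exact hrank.symm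

/-- If the root subsystems coincide, the sets of simple roots coincide. -/
lemma eq_of_rootsIn_eq {J J' : Finset V} (hJ : J ⊆ R.simples) (hJ' : J' ⊆ R.simples)
    (h : R.rootsIn (J : Set V) = R.rootsIn (J' : Set V)) : J = J' := by
  have key : ∀ (A B : Finset V), A ⊆ R.simples → B ⊆ R.simples →
      R.rootsIn (A : Set V) = R.rootsIn (B : Set V) → A ⊆ B := by
    intro A B hA hB hAB α hα
    have hαp : α ∈ R.pos := R.simple_mem_pos (hA hα)
    have hαin : α ∈ R.rootsIn (B : Set V) := by
      rw [← hAB]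
      exact ⟨R.simple_mem_roots (hA hα), Submodule.subset_span (by exact_mod_cast hα)⟩
    refine R.simple_preimage hB hαp hαin.2 (w := 1) (fun δ hδ => ?_) ?_
    · exact R.simple_mem_pos (hB hδ)
    · show R.htf ((1 : V ≃ₗᵢ[ℝ] V) α) ≤ 1
      rw [show (1 : V ≃ₗᵢ[ℝ] V) α = α from rfl, R.htf_simple (hA hα)]
  exact Finset.Subset.antisymm (key J J' hJ hJ' h) (key J' J hJ' hJ h.symm)

lemma sref_image_rootsIn {α : V} (hα : α ∈ R.simples) {J : Finset V} (hαJ : α ∈ J) :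
    (⇑(sref α)) '' R.rootsIn (J : Set V) = R.rootsIn (J : Set V) := by
  have hαr : α ∈ R.roots := R.simple_mem_roots hα
  have key : ∀ x ∈ R.rootsIn (J : Set V), sref α x ∈ R.rootsIn (J : Set V) := by
    rintro x ⟨hxr, hxs⟩
    refine ⟨R.sref_mem_roots hαr hxr, ?_⟩
    rw [sref_apply]
    exact Submodule.sub_mem _ hxs
      (Submodule.smul_mem _ _ (Submodule.subset_span (by exact_mod_cast hαJ)))
  apply Set.Subset.antisymm
  · rintro y ⟨x, hx, rfl⟩
    exact key x hx
  · intro y hy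
    exact ⟨sref α y, key y hy, sref_sref α y⟩

lemma main_aux : ∀ N : ℕ, ∀ w : V ≃ₗᵢ[ℝ] V, w ∈ R.weyl → R.nlen w ≤ N →
    ∀ I I' : Finset V, I ⊆ R.simples → I' ⊆ R.simples →
    (⇑w) '' R.rootsIn ↑I = R.rootsIn ↑I' →
    ∃ (k : ℕ) (J : ℕ → Finset V), J 0 = I ∧ J k = I' ∧
      (∀ i ≤ k, J i ⊆ R.simples) ∧
      ∀ i < k, AdjacentLevis R (J i) (J (i + 1)) := by
  classical
  intro N
  induction N with
  | zero =>
    intro w hw hn I I' hI hI' hmap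
    -- `w` is the identity
    have hw1 : w = 1 := R.eq_one_of_nlen_zero hw (Nat.le_zero.1 hn)
    subst hw1
    rw [show (⇑(1 : V ≃ₗᵢ[ℝ] V)) = id from rfl, Set.image_id] at hmap
    have hII' : I = I' := R.eq_of_rootsIn_eq hI hI' hmap
    subst hII'
    exact ⟨0, fun _ => I, rfl, rfl, fun _ _ => hI, fun i hi => absurd hi (Nat.not_lt_zero i)⟩
  | succ N ih =>
    intro w hw hn I I' hI hI' hmap
    by_cases hz : R.nlen w = 0
    · -- same base case
      have hw1 : w = 1 := R.eq_one_of_nlen_zero hw hz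
      subst hw1
      rw [show (⇑(1 : V ≃ₗᵢ[ℝ] V)) = id from rfl, Set.image_id] at hmap
      have hII' : I = I' := R.eq_of_rootsIn_eq hI hI' hmap
      subst hII'
      exact ⟨0, fun _ => I, rfl, rfl, fun _ _ => hI, fun i hi => absurd hi (Nat.not_lt_zero i)⟩
    · obtain ⟨α, hαs, hαneg⟩ :=
        R.exists_simple_neg (fun v hv => R.weyl_mem_roots hw hv) hz
      have hαr : α ∈ R.roots := R.simple_mem_roots hαs
      have hsref_weyl : sref α ∈ R.weyl :=
        Subgroup.subset_closure (sref_mem_reflectionsOn (by exact_mod_cast hαr))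
      by_cases hαI : α ∈ I
      · -- α ∈ I : decrease the length of w, keep I
        have hw' : w * sref α ∈ R.weyl := Subgroup.mul_mem _ hw hsref_weyl
        have hn' : R.nlen (w * sref α) ≤ N := by
          have := R.nlen_mul_sref_of_neg hαs hαneg
          omega
        have hmap' : (⇑(w * sref α)) '' R.rootsIn ↑I = R.rootsIn ↑I' := by
          rw [show ⇑(w * sref α) = ⇑w ∘ ⇑(sref α) from rfl, Set.image_comp,
            R.sref_image_rootsIn hαs hαI, hmap]
        exact ih (w * sref α) hw' hn' I I' hI hI' hmap'
      · -- α ∉ I : the key case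
        set K : Finset V := insert α I with hKdef
        have hK : K ⊆ R.simples := Finset.insert_subset hαs hI
        have hIK : I ⊆ K := Finset.subset_insert α I
        have hKcard : K.card = I.card + 1 := Finset.card_insert_of_notMem hαI
        have hKroots : (K : Set V) ⊆ (R.roots : Set V) := by
          intro x hx
          exact_mod_cast R.simple_mem_roots (hK (by exact_mod_cast hx))
        have hsrefαK : sref α ∈ reflectionSubgroup (K : Set V) :=
          Subgroup.subset_closure (sref_mem_reflectionsOn
            (by exact_mod_cast Finset.mem_insert_self α I))
        -- minimize the length over the coset w • W_K
        set S : Set ℕ := {n | ∃ u ∈ reflectionSubgroup (K : Set V), R.nlen (w * u⁻¹) = n}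
          with hSdef
        have hSne : S.Nonempty := ⟨_, sref α, hsrefαK, rfl⟩
        obtain ⟨u, hu, hmu⟩ := Nat.sInf_mem hSne
        set m := sInf S with hmdef
        set w₁ := w * u⁻¹ with hw₁def
        have hmin : ∀ u' ∈ reflectionSubgroup (K : Set V), m ≤ R.nlen (w * u'⁻¹) :=
          fun u' hu' => Nat.sInf_le ⟨u', hu', rfl⟩
        have huW : u ∈ R.weyl := R.reflectionSubgroup_le_weyl hKroots hu
        have hw₁W : w₁ ∈ R.weyl := Subgroup.mul_mem _ hw (Subgroup.inv_mem _ huW)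
        have hmN : m ≤ N := by
          have h1 : m ≤ R.nlen (w * (sref α)⁻¹) := hmin (sref α) hsrefαK
          rw [sref_inv] at h1
          have h2 := R.nlen_mul_sref_of_neg hαs hαneg
          omega
        -- w₁ maps K (hence Δ_K⁺) into Δ⁺
        have h5 : ∀ β ∈ K, w₁ β ∈ R.pos := by
          intro β hβ
          by_contra hcon
          have hβr : β ∈ R.roots := R.simple_mem_roots (hK hβ)
          have hβneg : -(w₁ β) ∈ R.pos :=
            (R.mem_pos_or_neg_mem_pos _ (R.weyl_mem_roots hw₁W hβr)).resolve_left hcon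
          have hstep := R.nlen_mul_sref_of_neg (hK hβ) hβneg
          have hsrefβK : sref β ∈ reflectionSubgroup (K : Set V) :=
            Subgroup.subset_closure (sref_mem_reflectionsOn (by exact_mod_cast hβ))
          have heq : w₁ * sref β = w * (sref β * u)⁻¹ := by
            rw [mul_inv_rev, sref_inv, hw₁def, mul_assoc]
          have := hmin (sref β * u) (Subgroup.mul_mem _ hsrefβK hu)
          rw [← heq] at this
          omega
        have hL2 : ∀ γ ∈ R.pos, γ ∈ Submodule.span ℝ (K : Set V) → w₁ γ ∈ R.pos :=
          R.weyl_pos_of_simples_pos hK (fun v hv => R.weyl_mem_roots hw₁W hv) h5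
        -- the new index set I₁
        set I₁ : Finset V := I'.image (fun v => w₁.symm v) with hI₁def
        have hI₁coe : (I₁ : Set V) = (⇑w₁.symm) '' (I' : Set V) := by
          rw [hI₁def, Finset.coe_image]
        have hI₁card : I₁.card = I'.card :=
          Finset.card_image_of_injective _ w₁.symm.injective
        have hIcard : I.card = I'.card := R.card_eq_of_image_rootsIn hI hI' w hmap
        -- each element of I₁ lies in K
        have hfact : ∀ δ ∈ I', ∃ x ∈ R.rootsIn (I : Set V),
            w x = δ ∧ w₁.symm δ = u x := by
          intro δ hδ
          have hδin : δ ∈ R.rootsIn (I' : Set V) :=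
            ⟨R.simple_mem_roots (hI' hδ), Submodule.subset_span (by exact_mod_cast hδ)⟩
          rw [← hmap] at hδin
          obtain ⟨x, hx, hwx⟩ := hδin
          refine ⟨x, hx, hwx, ?_⟩
          have : w₁ (u x) = δ := by
            rw [hw₁def, liem_mul_apply, ← hwx]
            congr 1
            rw [liem_inv_apply, LinearIsometryEquiv.symm_apply_apply]
          rw [← this, LinearIsometryEquiv.symm_apply_apply]
        have hmemK : ∀ δ ∈ I', w₁.symm δ ∈ K := by
          intro δ hδ
          obtain ⟨x, hx, hwx, hux⟩ := hfact δ hδ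
          have hγr : w₁.symm δ ∈ R.roots := by
            rw [hux]; exact R.weyl_mem_roots huW hx.1
          have hγspan : w₁.symm δ ∈ Submodule.span ℝ (K : Set V) := by
            rw [hux]
            have hxK : x ∈ Submodule.span ℝ (K : Set V) :=
              Submodule.span_mono (by exact_mod_cast hIK) hx.2
            exact (mem_span_iff_of_mem_reflectionSubgroup hu x).1 hxK
          have hγpos : w₁.symm δ ∈ R.pos := by
            rcases R.mem_pos_or_neg_mem_pos _ hγr with h | h
            · exact h
            · exfalso
              have hnegspan : -(w₁.symm δ) ∈ Submodule.span ℝ (K : Set V) :=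
                Submodule.neg_mem _ hγspan
              have := hL2 _ h hnegspan
              rw [map_neg, LinearIsometryEquiv.apply_symm_apply] at this
              exact R.neg_not_pos δ (R.simple_mem_pos (hI' hδ)) this
          refine R.simple_preimage hK hγpos hγspan h5 ?_
          rw [LinearIsometryEquiv.apply_symm_apply, R.htf_simple (hI' hδ)]
        have hI₁K : I₁ ⊆ K := by
          intro y hy
          rw [hI₁def, Finset.mem_image] at hy
          obtain ⟨δ, hδ, rfl⟩ := hy
          exact hmemK δ hδ
        -- span of I₁
        have hspanI₁ : ∀ z ∈ Submodule.span ℝ (I' : Set V),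
            w₁.symm z ∈ Submodule.span ℝ (I₁ : Set V) := by
          intro z hz
          rw [hI₁coe]
          exact liem_span_image w₁.symm _ hz
        have hspanI₁' : ∀ y ∈ Submodule.span ℝ (I₁ : Set V),
            w₁ y ∈ Submodule.span ℝ (I' : Set V) := by
          intro y hy
          rw [hI₁coe] at hy
          have := liem_span_image w₁ _ hy
          rw [← Set.image_comp] at this
          have himg : (⇑w₁ ∘ ⇑w₁.symm) '' (I' : Set V) = (I' : Set V) := by
            rw [show ⇑w₁ ∘ ⇑w₁.symm = id from funext fun z =>
              LinearIsometryEquiv.apply_symm_apply w₁ z, Set.image_id]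
          rwa [himg] at this
        -- u maps Δ_I to Δ_I₁
        have hU : (⇑u) '' R.rootsIn (I : Set V) = R.rootsIn (I₁ : Set V) := by
          apply Set.Subset.antisymm
          · rintro y ⟨x, hx, rfl⟩
            refine ⟨R.weyl_mem_roots huW hx.1, ?_⟩
            have hwx : w x ∈ R.rootsIn (I' : Set V) := by
              rw [← hmap]; exact ⟨x, hx, rfl⟩
            have : w₁.symm (w x) = u x := by
              rw [hw₁def]
              have : w₁ (u x) = w x := by
                rw [hw₁def, liem_mul_apply, liem_inv_apply,
                  LinearIsometryEquiv.symm_apply_apply]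
              rw [hw₁def] at this
              rw [← this, LinearIsometryEquiv.symm_apply_apply]
            rw [← this]
            exact hspanI₁ _ hwx.2
          · rintro y ⟨hyr, hysp⟩
            have hw₁y : w₁ y ∈ R.rootsIn (I' : Set V) :=
              ⟨R.weyl_mem_roots hw₁W hyr, hspanI₁' y hysp⟩
            rw [← hmap] at hw₁y
            obtain ⟨x, hx, hwx⟩ := hw₁y
            refine ⟨x, hx, ?_⟩
            have h1 : w₁ (u x) = w x := by
              rw [hw₁def, liem_mul_apply, liem_inv_apply,
                LinearIsometryEquiv.symm_apply_apply]
            have h2 : w₁ (u x) = w₁ y := by rw [h1, hwx]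
            exact (w₁.injective h2)
        -- w₁ maps Δ_I₁ to Δ_I'
        have hW1 : (⇑w₁) '' R.rootsIn (I₁ : Set V) = R.rootsIn (I' : Set V) := by
          apply Set.Subset.antisymm
          · rintro z ⟨y, ⟨hyr, hysp⟩, rfl⟩
            exact ⟨R.weyl_mem_roots hw₁W hyr, hspanI₁' y hysp⟩
          · intro z hz
            have hz' := hz
            rw [← hmap] at hz'
            obtain ⟨x, hx, hwx⟩ := hz'
            have hux : u x ∈ R.rootsIn (I₁ : Set V) := by
              rw [← hU]; exact ⟨x, hx, rfl⟩
            refine ⟨u x, hux, ?_⟩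
            rw [hw₁def, liem_mul_apply, liem_inv_apply,
              LinearIsometryEquiv.symm_apply_apply, hwx]
        -- the adjacency step I → I₁
        have hadj : AdjacentLevis R I I₁ := by
          refine ⟨by omega, Or.inr ⟨K, hK, hIK, hI₁K, hKcard, u, hu, hU⟩⟩
        -- the induction
        have hnw₁ : R.nlen w₁ ≤ N := by omega
        obtain ⟨k, J, hJ0, hJk, hJsub, hJadj⟩ :=
          ih w₁ hw₁W hnw₁ I₁ I' (hI₁K.trans hK) hI' hW1
        refine ⟨k + 1, fun n => Nat.casesOn n I (fun i => J i), rfl, hJk, ?_, ?_⟩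
        · intro i hi
          cases i with
          | zero => exact hI
          | succ i => exact hJsub i (by omega)
        · intro i hi
          cases i with
          | zero =>
            show AdjacentLevis R I (J 0)
            rw [hJ0]
            exact hadj
          | succ i => exact hJadj i (by omega)

end FD

end RootSystemData
/-- If `w ∈ W` maps `Δ_I` to `Δ_I'`, then `I` and `I'` are connected by a chain
of adjacent subsets of `Π`. -/
theorem statement14 {V : Type} [NormedAddCommGroup V] [InnerProductSpace ℝ V]
    [FiniteDimensional ℝ V] (R : RootSystemData V)
    (I I' : Finset V) (hI : I ⊆ R.simples) (hI' : I' ⊆ R.simples)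
    (w : V ≃ₗᵢ[ℝ] V) (hw : w ∈ R.weyl)
    (hmap : (⇑w) '' R.rootsIn ↑I = R.rootsIn ↑I') :
    ∃ (k : ℕ) (J : ℕ → Finset V), J 0 = I ∧ J k = I' ∧
      (∀ i ≤ k, J i ⊆ R.simples) ∧
      ∀ i < k, AdjacentLevis R (J i) (J (i + 1)) := by
  exact R.main_aux (R.nlen w) w hw (le_refl _) I I' hI hI' hmap
end

section
/- Assume Δ is irreducible with roots of two different lengths. Let Δ_l ⊆ Δ be the set of long roots (the roots of maximal length), which is itself a root system; let W(Δ_l) ≤ W be the subgroup generated by the reflections s_β for β ∈ Δ_l, and let W_s ≤ W be the subgroup generated by the reflections s_α for the short simple roots α ∈ Π. Then W(Δ_l) is normal in W, W_s ∩ W(Δ_l) = {1}, and W = W_s · W(Δ_l); that is, W is the internal semidirect product W_s ⋉ W(Δ_l). -/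
open scoped RealInnerProductSpace

/-- The long roots: the roots of maximal length. -/
def longRoots {V : Type} [NormedAddCommGroup V] [InnerProductSpace ℝ V]
    (R : RootSystemData V) : Set V :=
  {β | β ∈ R.roots ∧ ∀ γ ∈ R.roots, ‖γ‖ ≤ ‖β‖}

/-- The short simple roots: the simple roots which are not long. -/
def shortSimples {V : Type} [NormedAddCommGroup V] [InnerProductSpace ℝ V]
    (R : RootSystemData V) : Set V :=
  {α | α ∈ R.simples ∧ (α : V) ∉ longRoots R}

namespace Stmt15
variable {V : Type} [NormedAddCommGroup V] [InnerProductSpace ℝ V]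

/-- coefficient of the reflection -/
noncomputable def co (β v : V) : ℝ := 2 * ⟪v, β⟫ / ⟪β, β⟫

lemma co_add (β v w : V) : co β (v + w) = co β v + co β w := by
  simp [co, inner_add_left]; ring

lemma co_smul (β : V) (t : ℝ) (v : V) : co β (t • v) = t * co β v := by
  simp [co, real_inner_smul_left]; ring

lemma inner_refl (β v : V) : ⟪v - co β v • β, β⟫ = -⟪v, β⟫ := by
  rcases eq_or_ne β 0 with rfl | h
  · simp
  · have hq : ⟪β, β⟫ ≠ 0 := by
      simpa [inner_self_eq_zero] using h
    rw [inner_sub_left, real_inner_smul_left, co]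
    field_simp
    ring

lemma refl_invol (β v : V) : (v - co β v • β) - co β (v - co β v • β) • β = v := by
  have h1 : co β (v - co β v • β) = -co β v := by
    rcases eq_or_ne β 0 with rfl | h
    · simp [co]
    · have hq : ⟪β, β⟫ ≠ 0 := by simpa [inner_self_eq_zero] using h
      rw [co, inner_refl β v, co]
      field_simp
  rw [h1]
  module

lemma refl_norm (β v : V) : ‖v - co β v • β‖ = ‖v‖ := by
  rcases eq_or_ne β 0 with rfl | h
  · simp
  · have hq : ⟪β, β⟫ ≠ 0 := by simpa [inner_self_eq_zero] using h
    have key : ⟪v - co β v • β, v - co β v • β⟫ = ⟪v, v⟫ := by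
      rw [inner_sub_right, real_inner_smul_right]
      rw [show ⟪v - co β v • β, β⟫ = -⟪v, β⟫ from inner_refl β v]
      rw [inner_sub_left, real_inner_smul_left, real_inner_comm β v, co]
      field_simp
      ring
    have h2 : ‖v - co β v • β‖ ^ 2 = ‖v‖ ^ 2 := by
      rw [← real_inner_self_eq_norm_sq, ← real_inner_self_eq_norm_sq, key]
    exact (sq_eq_sq₀ (norm_nonneg _) (norm_nonneg _)).mp h2

/-- the reflection in `β` as a linear isometry equivalence -/
noncomputable def rf (β : V) : V ≃ₗᵢ[ℝ] V :=
  { toFun := fun v => v - co β v • β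
    invFun := fun v => v - co β v • β
    map_add' := fun x y => by show (x+y) - co β (x+y) • β = (x - co β x • β) + (y - co β y • β); rw [co_add]; module
    map_smul' := fun t x => by show t • x - co β (t • x) • β = t • (x - co β x • β); rw [co_smul]; module
    left_inv := refl_invol β
    right_inv := refl_invol β
    norm_map' := refl_norm β }

@[simp] lemma rf_apply (β v : V) : rf β v = v - co β v • β := rfl

lemma rf_apply' (β v : V) : rf β v = v - (2 * ⟪v, β⟫ / ⟪β, β⟫) • β := rfl

@[simp] lemma rf_self (β : V) (h : β ≠ 0) : rf β β = -β := by
  have hq : ⟪β, β⟫ ≠ 0 := by simpa [inner_self_eq_zero] using h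
  have : co β β = 2 := by rw [co]; field_simp
  rw [rf_apply, this]
  module

lemma rf_invol (β v : V) : rf β (rf β v) = v := refl_invol β v

lemma rf_mul_self (β : V) : rf β * rf β = 1 := by
  ext v
  exact refl_invol β v

lemma rf_inv (β : V) : (rf β)⁻¹ = rf β :=
  inv_eq_of_mul_eq_one_left (rf_mul_self β)

lemma rf_neg (β : V) : rf (-β) = rf β := by
  ext v
  show v - co (-β) v • (-β) = v - co β v • β
  have : co (-β) v = - co β v := by
    simp only [co, inner_neg_right, inner_neg_left, inner_neg_neg]
    ring
  rw [this]
  module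

lemma conj_rf (w : V ≃ₗᵢ[ℝ] V) (β : V) : w * rf β * w⁻¹ = rf (w β) := by
  ext v
  have h1 : ⟪w⁻¹ v, β⟫ = ⟪v, w β⟫ := by
    rw [← LinearIsometryEquiv.inner_map_map w (w⁻¹ v) β]
    congr 1
    exact w.apply_symm_apply v
  have h2 : ⟪w β, w β⟫ = ⟪β, β⟫ := LinearIsometryEquiv.inner_map_map w β β
  show w (rf β (w⁻¹ v)) = _
  rw [rf_apply, rf_apply, map_sub, LinearIsometryEquiv.map_smul, co, co, h1, h2]
  congr 1
  exact w.apply_symm_apply v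


/-- the reflections in elements of `U` (same as `RootSystemData.reflectionsOn`) -/
def rfOn (U : Set V) : Set (V ≃ₗᵢ[ℝ] V) :=
  {g | ∃ β ∈ U, ∀ v, g v = v - (2 * ⟪v, β⟫ / ⟪β, β⟫) • β}

lemma mem_rfOn {U : Set V} {g : V ≃ₗᵢ[ℝ] V} : g ∈ rfOn U ↔ ∃ β ∈ U, g = rf β := by
  constructor
  · rintro ⟨β, hβ, hfm⟩
    exact ⟨β, hβ, by ext v; rw [hfm v, rf_apply']⟩
  · rintro ⟨β, hβ, rfl⟩
    exact ⟨β, hβ, fun v => rf_apply' β v⟩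

lemma rf_mem_rfOn {U : Set V} {β : V} (h : β ∈ U) : rf β ∈ rfOn U :=
  mem_rfOn.mpr ⟨β, h, rfl⟩

/-- An abstract finite reduced crystallographic set of vectors closed under
reflections, with a generic covector `chi`. -/
structure Sys (V : Type) [NormedAddCommGroup V] [InnerProductSpace ℝ V] : Type where
  Phi : Set V
  chi : V
  fin : Phi.Finite
  zero_not_mem : (0 : V) ∉ Phi
  refl_mem : ∀ β ∈ Phi, ∀ γ ∈ Phi, rf β γ ∈ Phi
  reduced : ∀ β ∈ Phi, ∀ t : ℝ, t • β ∈ Phi → t = 1 ∨ t = -1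
  cry : ∀ β ∈ Phi, ∀ γ ∈ Phi, ∃ n : ℤ, 2 * ⟪β, γ⟫ = (n : ℝ) * ⟪γ, γ⟫
  generic : ∀ β ∈ Phi, ⟪chi, β⟫ ≠ 0

namespace Sys

variable (S : Sys V)

def P : Set V := {β | β ∈ S.Phi ∧ 0 < ⟪S.chi, β⟫}
def NP : Set V := {β | β ∈ S.Phi ∧ ⟪S.chi, β⟫ < 0}
def Ind : Set V := {α | α ∈ S.P ∧ ¬ ∃ β ∈ S.P, ∃ γ ∈ S.P, α = β + γ}

lemma ne_zero {β : V} (h : β ∈ S.Phi) : β ≠ 0 := fun e => S.zero_not_mem (e ▸ h)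

lemma inner_self_pos {β : V} (h : β ∈ S.Phi) : 0 < ⟪β, β⟫ := by
  have h0 : β ≠ 0 := S.ne_zero h
  have h1 : ⟪β, β⟫ ≠ 0 := by simpa [inner_self_eq_zero] using h0
  have h2 : 0 ≤ ⟪β, β⟫ := real_inner_self_nonneg
  exact lt_of_le_of_ne h2 (Ne.symm h1)

lemma neg_mem {β : V} (h : β ∈ S.Phi) : -β ∈ S.Phi := by
  have := S.refl_mem β h β h
  rwa [rf_self β (S.ne_zero h)] at this

lemma mem_P_or_NP {β : V} (h : β ∈ S.Phi) : β ∈ S.P ∨ β ∈ S.NP := by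
  rcases lt_or_gt_of_ne (S.generic β h) with h' | h'
  · exact Or.inr ⟨h, h'⟩
  · exact Or.inl ⟨h, h'⟩

lemma neg_mem_NP {β : V} (h : β ∈ S.P) : -β ∈ S.NP :=
  ⟨S.neg_mem h.1, by rw [inner_neg_right]; linarith [h.2]⟩

lemma neg_mem_P {β : V} (h : β ∈ S.NP) : -β ∈ S.P :=
  ⟨S.neg_mem h.1, by rw [inner_neg_right]; linarith [h.2]⟩

lemma not_NP_of_P {β : V} (h : β ∈ S.P) : β ∉ S.NP := fun h' => absurd h.2 (not_lt.mpr h'.2.le)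

lemma mem_P_of_not_NP {β : V} (h : β ∈ S.Phi) (h' : β ∉ S.NP) : β ∈ S.P :=
  (S.mem_P_or_NP h).resolve_right h'

/-- the number of elements of `Phi` on which `chi` is smaller than on `β`:
an induction measure. -/
noncomputable def mu (β : V) : ℕ := {γ | γ ∈ S.Phi ∧ ⟪S.chi, γ⟫ < ⟪S.chi, β⟫}.ncard

lemma mu_lt {β β' : V} (hβ' : β' ∈ S.Phi) (h : ⟪S.chi, β'⟫ < ⟪S.chi, β⟫) :
    S.mu β' < S.mu β := by
  apply Set.ncard_lt_ncard
  · constructor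
    · rintro γ ⟨h1, h2⟩
      exact ⟨h1, h2.trans h⟩
    · intro hsub
      have : β' ∈ {γ | γ ∈ S.Phi ∧ ⟪S.chi, γ⟫ < ⟪S.chi, β'⟫} := hsub ⟨hβ', h⟩
      exact absurd this.2 (lt_irrefl _)
  · exact S.fin.subset (fun γ hγ => hγ.1)

lemma multiset_sum_inner (m : Multiset V) (x : V) :
    ⟪m.sum, x⟫ = (m.map fun v => ⟪v, x⟫).sum := by
  induction m using Multiset.induction_on with
  | empty => simp
  | cons a s ih => simp [inner_add_left, ih]

lemma multiset_inner_sum (m : Multiset V) (x : V) :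
    ⟪x, m.sum⟫ = (m.map fun v => ⟪x, v⟫).sum := by
  induction m using Multiset.induction_on with
  | empty => simp
  | cons a s ih => simp [inner_add_right, ih]

lemma multiset_sum_nonpos {m : Multiset ℝ} (h : ∀ x ∈ m, x ≤ 0) : m.sum ≤ 0 := by
  induction m using Multiset.induction_on with
  | empty => simp
  | cons a s ih =>
      have := h a (Multiset.mem_cons_self a s)
      have h2 := ih fun x hx => h x (Multiset.mem_cons_of_mem hx)
      rw [Multiset.sum_cons]; linarith

lemma multiset_sum_pos {m : Multiset ℝ} (h : ∀ x ∈ m, 0 < x) (hne : m ≠ 0) : 0 < m.sum := by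
  induction m using Multiset.induction_on with
  | empty => exact absurd rfl hne
  | cons a s ih =>
      have ha := h a (Multiset.mem_cons_self a s)
      rcases eq_or_ne s 0 with rfl | hs
      · simpa using ha
      · have := ih (fun x hx => h x (Multiset.mem_cons_of_mem hx)) hs
        rw [Multiset.sum_cons]; linarith

/-- every element of `P` is a nonempty sum of indecomposables -/
lemma decomp : ∀ β ∈ S.P, ∃ m : Multiset V, m ≠ 0 ∧ (∀ γ ∈ m, γ ∈ S.Ind) ∧ β = m.sum := by
  suffices H : ∀ n : ℕ, ∀ β ∈ S.P, S.mu β = n →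
      ∃ m : Multiset V, m ≠ 0 ∧ (∀ γ ∈ m, γ ∈ S.Ind) ∧ β = m.sum by
    intro β hβ; exact H _ β hβ rfl
  intro n
  induction n using Nat.strong_induction_on with
  | _ n ih =>
    intro β hβ hn
    by_cases hind : β ∈ S.Ind
    · exact ⟨{β}, by simp, by simpa using hind, by simp⟩
    · have hdec : ∃ β₁ ∈ S.P, ∃ β₂ ∈ S.P, β = β₁ + β₂ := by
        by_contra h
        exact hind ⟨hβ, h⟩
      obtain ⟨β₁, hβ₁, β₂, hβ₂, rfl⟩ := hdec
      have l1 : ⟪S.chi, β₁⟫ < ⟪S.chi, β₁ + β₂⟫ := by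
        rw [inner_add_right]; linarith [hβ₂.2]
      have l2 : ⟪S.chi, β₂⟫ < ⟪S.chi, β₁ + β₂⟫ := by
        rw [inner_add_right]; linarith [hβ₁.2]
      obtain ⟨m₁, hm₁ne, hm₁, hs₁⟩ := ih _ (hn ▸ S.mu_lt hβ₁.1 l1) β₁ hβ₁ rfl
      obtain ⟨m₂, hm₂ne, hm₂, hs₂⟩ := ih _ (hn ▸ S.mu_lt hβ₂.1 l2) β₂ hβ₂ rfl
      refine ⟨m₁ + m₂, by simp [hm₁ne], ?_, ?_⟩
      · intro γ hγ
        rcases Multiset.mem_add.mp hγ with h | h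
        · exact hm₁ γ h
        · exact hm₂ γ h
      · rw [Multiset.sum_add, ← hs₁, ← hs₂]

/-- strict Cauchy–Schwarz for non-proportional elements, packaged:
if `⟪β,γ⟫ > 0` and `β ≠ ±γ` then `β - γ ∈ Phi`. -/
lemma sub_mem {β γ : V} (hβ : β ∈ S.Phi) (hγ : γ ∈ S.Phi) (h1 : β ≠ γ) (h2 : β ≠ -γ)
    (hpos : 0 < ⟪β, γ⟫) : β - γ ∈ S.Phi := by
  have hq : 0 < ⟪γ, γ⟫ := S.inner_self_pos hγ
  have hp : 0 < ⟪β, β⟫ := S.inner_self_pos hβ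
  -- strict Cauchy-Schwarz
  have hcs : ⟪β, γ⟫ ^ 2 < ⟪β, β⟫ * ⟪γ, γ⟫ := by
    rcases lt_or_ge (⟪β, γ⟫ ^ 2) (⟪β, β⟫ * ⟪γ, γ⟫) with h | h
    · exact h
    · exfalso
      set t : ℝ := ⟪β, γ⟫ / ⟪γ, γ⟫ with ht
      have hv : ⟪β - t • γ, β - t • γ⟫ ≤ 0 := by
        have e : ⟪β - t • γ, β - t • γ⟫ = ⟪β,β⟫ - 2*t*⟪β,γ⟫ + t^2*⟪γ,γ⟫ := by
          rw [inner_sub_sub_self]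
          simp only [real_inner_smul_left, real_inner_smul_right]
          rw [real_inner_comm γ β]
          ring
        have e2 : ⟪β,β⟫ - 2*t*⟪β,γ⟫ + t^2*⟪γ,γ⟫ = (⟪β,β⟫*⟪γ,γ⟫ - ⟪β,γ⟫^2)/⟪γ,γ⟫ := by
          rw [ht]; field_simp; ring
        rw [e, e2]
        have hnum : ⟪β,β⟫*⟪γ,γ⟫ - ⟪β,γ⟫^2 ≤ 0 := by nlinarith
        exact div_nonpos_of_nonpos_of_nonneg hnum hq.le
      have hv0 : β - t • γ = 0 := by
        have := real_inner_self_nonneg (x := β - t • γ)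
        have : ⟪β - t • γ, β - t • γ⟫ = 0 := le_antisymm hv this
        exact inner_self_eq_zero.mp this
      have hβt : β = t • γ := by
        have := sub_eq_zero.mp hv0; exact this
      rcases S.reduced γ hγ t (hβt ▸ hβ) with h' | h'
      · exact h1 (by rw [hβt, h', one_smul])
      · exact h2 (by rw [hβt, h', neg_one_smul])
  obtain ⟨n, hn⟩ := S.cry β hβ γ hγ
  obtain ⟨m, hm⟩ := S.cry γ hγ β hβ
  have hn1 : 1 ≤ n := by
    have h0 : 0 < (n : ℝ) * ⟪γ, γ⟫ := by rw [← hn]; linarith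
    have h1 : (0 : ℝ) < n := (mul_pos_iff.mp h0).elim (fun h => h.1) (fun h => absurd hq (not_lt.mpr h.2.le))
    exact_mod_cast Int.cast_pos.mp h1
  have hm1 : 1 ≤ m := by
    have h0 : 0 < (m : ℝ) * ⟪β, β⟫ := by rw [← hm, real_inner_comm]; linarith
    have h1 : (0 : ℝ) < m := (mul_pos_iff.mp h0).elim (fun h => h.1) (fun h => absurd hp (not_lt.mpr h.2.le))
    exact_mod_cast Int.cast_pos.mp h1
  have hprod : n * m ≤ 3 := by
    have hcast : (n : ℝ) * m * (⟪γ,γ⟫ * ⟪β,β⟫) = 4 * ⟪β,γ⟫ ^ 2 := by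
      have e1 : (n:ℝ) * ⟪γ,γ⟫ = 2 * ⟪β,γ⟫ := hn.symm
      have e2 : (m:ℝ) * ⟪β,β⟫ = 2 * ⟪γ,β⟫ := hm.symm
      calc (n : ℝ) * m * (⟪γ,γ⟫ * ⟪β,β⟫) = ((n:ℝ) * ⟪γ,γ⟫) * ((m:ℝ) * ⟪β,β⟫) := by ring
        _ = (2 * ⟪β,γ⟫) * (2 * ⟪γ,β⟫) := by rw [e1, e2]
        _ = 4 * ⟪β,γ⟫ ^ 2 := by rw [real_inner_comm γ β]; ring
    have h4 : (n : ℝ) * m < 4 := by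
      have hlt : (n:ℝ) * m * (⟪γ,γ⟫ * ⟪β,β⟫) < 4 * (⟪β,β⟫ * ⟪γ,γ⟫) := by
        rw [hcast]; nlinarith [hcs]
      have hqp : 0 < ⟪γ,γ⟫ * ⟪β,β⟫ := mul_pos hq hp
      nlinarith [hlt, hqp]
    have : (n * m : ℤ) < 4 := by exact_mod_cast h4
    omega
  have hn1m1 : n = 1 ∨ m = 1 := by
    rcases eq_or_lt_of_le hn1 with h | h
    · exact Or.inl h.symm
    rcases eq_or_lt_of_le hm1 with h' | h'
    · exact Or.inr h'.symm
    exfalso; nlinarith [h, h']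
  rcases hn1m1 with rfl0 | rfl0
  · -- 2⟪β,γ⟫ = ⟪γ,γ⟫, so rf γ β = β - γ
    rw [rfl0] at hn
    have hn' : 2 * ⟪β,γ⟫ = ⟪γ,γ⟫ := by rw [hn]; norm_num
    have hco : co γ β = 1 := by
      rw [co, hn']; field_simp
    have := S.refl_mem γ hγ β hβ
    rwa [rf_apply, hco, one_smul] at this
  · rw [rfl0] at hm
    have hm' : 2 * ⟪γ,β⟫ = ⟪β,β⟫ := by rw [hm]; norm_num
    have hco : co β γ = 1 := by
      rw [co, hm']; field_simp
    have := S.refl_mem β hβ γ hγ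
    rw [rf_apply, hco, one_smul] at this
    have := S.neg_mem this
    rwa [neg_sub] at this

/-- indecomposables have pairwise non-positive inner products -/
lemma ind_inner_nonpos {α α' : V} (hα : α ∈ S.Ind) (hα' : α' ∈ S.Ind) (hne : α ≠ α') :
    ⟪α, α'⟫ ≤ 0 := by
  by_contra hlt
  push_neg at hlt
  have hne2 : α ≠ -α' := by
    intro h
    rw [h, inner_neg_left] at hlt
    linarith [S.inner_self_pos hα'.1.1]
  have hδ : α - α' ∈ S.Phi := S.sub_mem hα.1.1 hα'.1.1 hne hne2 hlt
  rcases S.mem_P_or_NP hδ with h | h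
  · exact hα.2 ⟨α', hα'.1, α - α', h, by abel⟩
  · exact hα'.2 ⟨α, hα.1, -(α - α'), S.neg_mem_P h, by abel⟩

lemma sum_of_all_eq {m : Multiset V} {α : V} (h : ∀ x ∈ m, x = α) :
    m.sum = (Multiset.card m : ℝ) • α := by
  rw [Multiset.eq_replicate_card.mpr h]
  simp [Multiset.sum_replicate, ← Nat.cast_smul_eq_nsmul ℝ]

/-- KEY: reflection in an indecomposable permutes the rest of `P` -/
lemma key_perm {α β : V} (hα : α ∈ S.Ind) (hβ : β ∈ S.P) (hne : β ≠ α) :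
    rf α β ∈ S.P := by
  classical
  have hαP := hα.1
  have hαΦ := hαP.1
  have hβΦ := hβ.1
  have hrfΦ : rf α β ∈ S.Phi := S.refl_mem α hαΦ β hβΦ
  by_contra hnot
  have hrfNP : rf α β ∈ S.NP := (S.mem_P_or_NP hrfΦ).resolve_left hnot
  obtain ⟨m, hmne, hmind, hmsum⟩ := S.decomp β hβ
  obtain ⟨m', hm'ne, hm'ind, hm'sum⟩ := S.decomp (-(rf α β)) (S.neg_mem_P hrfNP)
  -- there is γ₀ ∈ m with γ₀ ≠ α
  have hγ₀ : ∃ γ₀ ∈ m, γ₀ ≠ α := by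
    by_contra h
    push_neg at h
    have : β = (Multiset.card m : ℝ) • α := by rw [hmsum]; exact sum_of_all_eq h
    rcases S.reduced α hαΦ (Multiset.card m : ℝ) (this ▸ hβΦ) with h' | h'
    · rw [this, h', one_smul] at hne; exact hne rfl
    · have : (0:ℝ) ≤ (Multiset.card m : ℝ) := Nat.cast_nonneg _
      rw [h'] at this; linarith
  obtain ⟨γ₀, hγ₀m, hγ₀ne⟩ := hγ₀
  set M : Multiset V := m + m' with hM
  have hMsum : M.sum = co α β • α := by
    rw [Multiset.sum_add, ← hmsum, ← hm'sum, rf_apply]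
    abel
  set M₁ : Multiset V := M.filter (fun γ => γ ≠ α) with hM₁
  set t : ℕ := Multiset.card (M.filter (fun γ => γ = α)) with hT
  have hsplit : M.filter (fun γ => γ = α) + M₁ = M := Multiset.filter_add_not _ M
  have hfsum : (M.filter (fun γ => γ = α)).sum = (t : ℝ) • α := by
    rw [hT]
    exact sum_of_all_eq (fun x hx => (Multiset.mem_filter.mp hx).2)
  have hM₁sum : M₁.sum = (co α β - t) • α := by
    have : (M.filter (fun γ => γ = α)).sum + M₁.sum = co α β • α := by
      rw [← Multiset.sum_add, hsplit, hMsum]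
    rw [hfsum] at this
    have := sub_eq_of_eq_add' this.symm
    rw [← this, sub_smul]
  have hMind : ∀ γ ∈ M, γ ∈ S.Ind := by
    intro γ hγ
    rcases Multiset.mem_add.mp hγ with h | h
    · exact hmind γ h
    · exact hm'ind γ h
  -- inner with α is nonpositive
  have hip : ⟪M₁.sum, α⟫ ≤ 0 := by
    rw [multiset_sum_inner]
    apply multiset_sum_nonpos
    intro x hx
    obtain ⟨v, hv, rfl⟩ := Multiset.mem_map.mp hx
    have hvM := Multiset.mem_filter.mp hv
    exact S.ind_inner_nonpos (hMind v hvM.1) hα hvM.2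
  have hct : co α β - t ≤ 0 := by
    rw [hM₁sum, real_inner_smul_left] at hip
    have := S.inner_self_pos hαΦ
    nlinarith
  -- chi-value is positive
  have hγ₀M₁ : γ₀ ∈ M₁ := Multiset.mem_filter.mpr ⟨Multiset.mem_add.mpr (Or.inl hγ₀m), hγ₀ne⟩
  have hchi : 0 < ⟪S.chi, M₁.sum⟫ := by
    rw [multiset_inner_sum]
    apply multiset_sum_pos
    · intro x hx
      obtain ⟨v, hv, rfl⟩ := Multiset.mem_map.mp hx
      have hvM := Multiset.mem_filter.mp hv
      exact (hMind v hvM.1).1.2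
    · intro h
      rw [Multiset.map_eq_zero] at h
      rw [h] at hγ₀M₁
      exact absurd hγ₀M₁ (Multiset.notMem_zero γ₀)
  rw [hM₁sum, real_inner_smul_right] at hchi
  have hchiα : 0 < ⟪S.chi, α⟫ := hαP.2
  nlinarith

lemma conj_rf_mem {w : V ≃ₗᵢ[ℝ] V} {U : Set V} (hU : ∀ β ∈ U, w β ∈ U)
    (hw : w ∈ Subgroup.closure (rfOn U)) {β : V} (hβ : β ∈ U) :
    rf (w β) ∈ Subgroup.closure (rfOn U) := by
  rw [← conj_rf]
  exact mul_mem (mul_mem hw (Subgroup.subset_closure (rf_mem_rfOn hβ))) (inv_mem hw)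

/-- every element of `P` is in the orbit of an indecomposable under the group
generated by reflections in indecomposables -/
lemma orbit : ∀ β ∈ S.P, ∃ w ∈ Subgroup.closure (rfOn S.Ind), ∃ α ∈ S.Ind, β = w α := by
  suffices H : ∀ n : ℕ, ∀ β ∈ S.P, S.mu β = n →
      ∃ w ∈ Subgroup.closure (rfOn S.Ind), ∃ α ∈ S.Ind, β = w α by
    intro β hβ; exact H _ β hβ rfl
  intro n
  induction n using Nat.strong_induction_on with
  | _ n ih =>
    intro β hβ hn
    by_cases hind : β ∈ S.Ind
    · exact ⟨1, one_mem _, β, hind, rfl⟩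
    · obtain ⟨m, hmne, hmind, hmsum⟩ := S.decomp β hβ
      have hγ : ∃ γ ∈ m, 0 < ⟪β, γ⟫ := by
        by_contra h
        push_neg at h
        have hs : ⟪β, m.sum⟫ ≤ 0 := by
          rw [multiset_inner_sum]
          exact multiset_sum_nonpos (by
            intro x hx
            obtain ⟨v, hv, rfl⟩ := Multiset.mem_map.mp hx
            exact h v hv)
        have : ⟪β, β⟫ ≤ 0 := by nth_rewrite 2 [hmsum]; exact hs
        linarith [S.inner_self_pos hβ.1]
      obtain ⟨γ, hγm, hγpos⟩ := hγ
      have hγInd : γ ∈ S.Ind := hmind γ hγm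
      have hβγ : β ≠ γ := fun h => hind (h ▸ hγInd)
      have hrfP : rf γ β ∈ S.P := S.key_perm hγInd hβ hβγ
      have hlt : ⟪S.chi, rf γ β⟫ < ⟪S.chi, β⟫ := by
        rw [rf_apply, inner_sub_right, real_inner_smul_right]
        have hco : 0 < co γ β := by
          rw [co]
          exact div_pos (by linarith) (S.inner_self_pos hγInd.1.1)
        have := hγInd.1.2
        nlinarith
      obtain ⟨w, hw, α, hα, heq⟩ := ih _ (hn ▸ S.mu_lt hrfP.1 hlt) _ hrfP rfl
      refine ⟨rf γ * w, mul_mem (Subgroup.subset_closure (rf_mem_rfOn hγInd)) hw, α, hα, ?_⟩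
      have : rf γ (rf γ β) = rf γ (w α) := by rw [heq]
      rw [rf_invol] at this
      rw [this]
      rfl

/-- the reflection group of `Phi` is generated by reflections in indecomposables -/
lemma closure_eq : Subgroup.closure (rfOn S.Phi) = Subgroup.closure (rfOn S.Ind) := by
  apply le_antisymm
  · rw [Subgroup.closure_le]
    intro g hg
    obtain ⟨β, hβ, rfl⟩ := mem_rfOn.mp hg
    have key : ∀ β' ∈ S.P, rf β' ∈ Subgroup.closure (rfOn S.Ind) := by
      intro β' hβ'
      obtain ⟨w, hw, α, hα, rfl⟩ := S.orbit β' hβ'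
      rw [← conj_rf]
      exact mul_mem (mul_mem hw (Subgroup.subset_closure (rf_mem_rfOn hα))) (inv_mem hw)
    rcases S.mem_P_or_NP hβ with h | h
    · exact key β h
    · have := key (-β) (S.neg_mem_P h)
      rwa [rf_neg] at this
  · rw [Subgroup.closure_le]
    intro g hg
    obtain ⟨β, hβ, rfl⟩ := mem_rfOn.mp hg
    exact Subgroup.subset_closure (rf_mem_rfOn hβ.1.1)

end Sys

/-- word: the product of the reflections along a list -/
noncomputable def wd (L : List V) : V ≃ₗᵢ[ℝ] V := (L.map rf).prod

@[simp] lemma wd_nil : wd ([] : List V) = 1 := rfl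

@[simp] lemma wd_cons (a : V) (T : List V) : wd (a :: T) = rf a * wd T := by
  simp [wd]

lemma wd_append (L₁ L₂ : List V) : wd (L₁ ++ L₂) = wd L₁ * wd L₂ := by
  simp [wd]

lemma wd_inv (L : List V) : (wd L)⁻¹ = wd L.reverse := by
  induction L with
  | nil => simp
  | cons a T ih =>
      rw [wd_cons, mul_inv_rev, ih, List.reverse_cons, wd_append]
      simp [wd, rf_inv]

lemma mem_closure_word {U : Set V} {w : V ≃ₗᵢ[ℝ] V}
    (hw : w ∈ Subgroup.closure (rfOn U)) :
    ∃ L : List V, (∀ γ ∈ L, γ ∈ U) ∧ w = wd L := by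
  induction hw using Subgroup.closure_induction with
  | mem g hg =>
      obtain ⟨β, hβ, rfl⟩ := mem_rfOn.mp hg
      exact ⟨[β], by simpa using hβ, by simp⟩
  | one => exact ⟨[], by simp, rfl⟩
  | mul x y _ _ ihx ihy =>
      obtain ⟨L₁, h₁, rfl⟩ := ihx
      obtain ⟨L₂, h₂, rfl⟩ := ihy
      refine ⟨L₁ ++ L₂, ?_, (wd_append L₁ L₂).symm⟩
      intro γ hγ
      rcases List.mem_append.mp hγ with h | h
      · exact h₁ γ h
      · exact h₂ γ h
  | inv x _ ihx =>
      obtain ⟨L, hL, rfl⟩ := ihx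
      exact ⟨L.reverse, fun γ hγ => hL γ (List.mem_reverse.mp hγ), wd_inv L⟩

namespace Sys
variable (S : Sys V)

lemma wd_mem_Phi {L : List V} (hL : ∀ γ ∈ L, γ ∈ S.Phi) {β : V} (hβ : β ∈ S.Phi) :
    wd L β ∈ S.Phi := by
  induction L with
  | nil => simpa using hβ
  | cons a T ih =>
      rw [wd_cons]
      have h1 : wd T β ∈ S.Phi := ih (fun γ hγ => hL γ (List.mem_cons_of_mem a hγ))
      have : (rf a * wd T) β = rf a (wd T β) := rfl
      rw [this]
      exact S.refl_mem a (hL a List.mem_cons_self) _ h1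

/-- Deletion lemma -/
lemma lemD : ∀ (L : List V), (∀ γ ∈ L, γ ∈ S.Ind) → ∀ α ∈ S.Ind, wd L α ∈ S.NP →
    ∃ L' : List V, (∀ γ ∈ L', γ ∈ S.Ind) ∧ L'.length + 1 = L.length ∧ wd L' = wd L * rf α := by
  intro L
  induction L with
  | nil =>
      intro _ α hα hNP
      simp only [wd_nil] at hNP
      exact absurd (S.not_NP_of_P hα.1) (by simpa using hNP)
  | cons a T ih =>
      intro hL α hα hNP
      have haInd : a ∈ S.Ind := hL a List.mem_cons_self
      have hTInd : ∀ γ ∈ T, γ ∈ S.Ind := fun γ hγ => hL γ (List.mem_cons_of_mem a hγ)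
      set x : V := wd T α with hx
      have hxΦ : x ∈ S.Phi := S.wd_mem_Phi (fun γ hγ => (hTInd γ hγ).1.1) hα.1.1
      have hcons : wd (a :: T) α = rf a x := by rw [wd_cons]; rfl
      by_cases hxP : x ∈ S.P
      · -- then x = a
        have hxa : x = a := by
          by_contra hne
          have := S.key_perm haInd hxP hne
          rw [← hcons] at this
          exact S.not_NP_of_P this hNP
        have hconj : rf a = wd T * rf α * (wd T)⁻¹ := by
          rw [conj_rf, ← hx, hxa]
        refine ⟨T, hTInd, by simp, ?_⟩
        rw [wd_cons, hconj]
        have h2 : rf α * rf α = 1 := rf_mul_self α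
        calc wd T = wd T * (rf α * rf α) := by rw [h2, mul_one]
          _ = wd T * rf α * (wd T)⁻¹ * wd T * rf α := by group
      · have hxNP : x ∈ S.NP := (S.mem_P_or_NP hxΦ).resolve_left hxP
        obtain ⟨T', hT'Ind, hT'len, hT'eq⟩ := ih hTInd α hα hxNP
        refine ⟨a :: T', fun γ hγ => ?_, by simp [← hT'len], ?_⟩
        · rcases List.mem_cons.mp hγ with rfl | h
          · exact haInd
          · exact hT'Ind γ h
        · rw [wd_cons, hT'eq, wd_cons, mul_assoc]

/-- MAIN: an element of the reflection group of `Phi` mapping `P` into `P` is trivial -/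
lemma fix_P_eq_one {w : V ≃ₗᵢ[ℝ] V} (hw : w ∈ Subgroup.closure (rfOn S.Phi))
    (hP : ∀ β ∈ S.P, w β ∈ S.P) : w = 1 := by
  rw [S.closure_eq] at hw
  obtain ⟨L, hL, rfl⟩ := mem_closure_word hw
  clear hw
  suffices H : ∀ n : ℕ, ∀ L : List V, L.length = n → (∀ γ ∈ L, γ ∈ S.Ind) →
      (∀ β ∈ S.P, wd L β ∈ S.P) → wd L = 1 by
    exact H _ L rfl hL hP
  intro n
  induction n using Nat.strong_induction_on with
  | _ n ih =>
    intro L hlen hLInd hLP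
    rcases L.eq_nil_or_concat' with rfl | ⟨L₀, α, rfl⟩
    · rfl
    · have hαInd : α ∈ S.Ind := hLInd α (by simp)
      have hL₀Ind : ∀ γ ∈ L₀, γ ∈ S.Ind := fun γ hγ => hLInd γ (by simp [hγ])
      have hsplit : wd (L₀ ++ [α]) = wd L₀ * rf α := by
        rw [wd_append]; simp [wd]
      have hwα : wd (L₀ ++ [α]) α ∈ S.P := hLP α hαInd.1
      have hL₀α : wd L₀ α ∈ S.NP := by
        have h1 : wd L₀ α = wd (L₀ ++ [α]) (rf α α) := by
          rw [hsplit]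
          have : (wd L₀ * rf α) (rf α α) = wd L₀ (rf α (rf α α)) := rfl
          rw [this, rf_invol]
        rw [h1, rf_self α (S.ne_zero hαInd.1.1), map_neg]
        exact S.neg_mem_NP hwα
      obtain ⟨L', hL'Ind, hL'len, hL'eq⟩ := S.lemD L₀ hL₀Ind α hαInd hL₀α
      rw [← hsplit] at hL'eq
      have hlen' : L'.length < n := by
        have h1 : (L₀ ++ [α]).length = L₀.length + 1 := by simp
        omega
      have := ih L'.length hlen' L' rfl hL'Ind (by rw [hL'eq]; exact hLP)
      rw [← hL'eq, this]

end Sys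

section Glue

variable (R : RootSystemData V) [FiniteDimensional ℝ V]

lemma reflOn_eq (U : Set V) : RootSystemData.reflectionsOn U = rfOn U := rfl

lemma rfOn_mono {U U' : Set V} (h : U ⊆ U') : rfOn U ⊆ rfOn U' := by
  rintro g ⟨β, hβ, hg⟩
  exact ⟨β, h hβ, hg⟩

lemma exists_chi : ∃ χ : V, ∀ α ∈ R.simples, ⟪χ, α⟫ = 1 := by
  classical
  have li : LinearIndepOn ℝ id (R.simples : Set V) := R.simples_linearIndependent
  set b := Module.Basis.extend li with hb
  set f : V →ₗ[ℝ] ℝ := b.constr ℝ (fun i => if (i : V) ∈ R.simples then (1:ℝ) else 0) with hf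
  refine ⟨(InnerProductSpace.toDual ℝ V).symm (LinearMap.toContinuousLinearMap f), ?_⟩
  intro α hα
  rw [InnerProductSpace.toDual_symm_apply]
  have hα' : α ∈ li.extend (Set.subset_univ _) := li.subset_extend _ (by simpa using hα)
  have h1 : b ⟨α, hα'⟩ = α := Module.Basis.extend_apply_self li ⟨α, hα'⟩
  have h2 : f (b ⟨α, hα'⟩) = if ((⟨α, hα'⟩ : li.extend (Set.subset_univ _)) : V) ∈ R.simples
      then (1:ℝ) else 0 := b.constr_basis ℝ _ _
  show (LinearMap.toContinuousLinearMap f) α = 1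
  have h3 : f α = 1 := by
    rw [← h1, h2]
    simp [hα]
  simpa using h3

lemma pos_chi_val {χ : V} (hχ : ∀ α ∈ R.simples, ⟪χ, α⟫ = 1)
    {β : V} (c : V →₀ ℕ) (hsupp : (c.support : Set V) ⊆ (R.simples : Set V))
    (hsum : β = c.sum fun α n => (n : ℝ) • α) :
    ⟪χ, β⟫ = ((∑ a ∈ c.support, c a : ℕ) : ℝ) := by
  rw [hsum]
  show ⟪χ, ∑ a ∈ c.support, (c a : ℝ) • a⟫ = _
  rw [inner_sum]
  push_cast
  apply Finset.sum_congr rfl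
  intro a ha
  rw [real_inner_smul_right, hχ a (hsupp (Finset.mem_coe.mpr ha))]
  ring

lemma pos_chi {χ : V} (hχ : ∀ α ∈ R.simples, ⟪χ, α⟫ = 1)
    {β : V} (hβ : β ∈ R.pos) :
    ∃ N : ℕ, 1 ≤ N ∧ ⟪χ, β⟫ = N := by
  obtain ⟨c, hsupp, hsum⟩ := R.pos_sum_of_simples β hβ
  have hval : ⟪χ, β⟫ = ((∑ a ∈ c.support, c a : ℕ) : ℝ) := pos_chi_val R hχ c hsupp hsum
  refine ⟨∑ a ∈ c.support, c a, ?_, hval⟩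
  by_contra h
  push_neg at h
  have h0 : ∑ a ∈ c.support, c a = 0 := Nat.lt_one_iff.mp h
  have hall : ∀ a ∈ c.support, c a = 0 := Finset.sum_eq_zero_iff.mp h0
  have hempty : c.support = ∅ := by
    by_contra hne
    obtain ⟨a, ha⟩ := Finset.nonempty_iff_ne_empty.mpr hne
    exact (Finsupp.mem_support_iff.mp ha) (hall a ha)
  have hc0 : c = 0 := Finsupp.support_eq_empty.mp hempty
  have : β = 0 := by rw [hsum, hc0]; simp
  exact R.zero_not_mem (this ▸ R.pos_subset hβ)

/-- the root system `Δ` as a `Sys` -/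
noncomputable def SD : Sys V where
  Phi := (R.roots : Set V)
  chi := Classical.choose (exists_chi R)
  fin := R.roots.finite_toSet
  zero_not_mem := by simpa using R.zero_not_mem
  refl_mem := fun β hβ γ hγ => by
    have := R.reflect_mem β hβ γ hγ
    rwa [← rf_apply'] at this
  reduced := fun β hβ t ht => R.reduced β hβ t ht
  cry := fun β hβ γ hγ => R.crystallographic β hβ γ hγ
  generic := by
    intro β hβ
    have hχ := Classical.choose_spec (exists_chi R)
    rcases R.mem_pos_or_neg_mem_pos β hβ with h | h
    · obtain ⟨N, hN1, hN⟩ := pos_chi R hχ h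
      rw [hN]
      have : (1:ℝ) ≤ N := by exact_mod_cast hN1
      linarith
    · obtain ⟨N, hN1, hN⟩ := pos_chi R hχ h
      rw [inner_neg_right] at hN
      have h1 : (1:ℝ) ≤ N := by exact_mod_cast hN1
      intro hc
      rw [hc] at hN
      have : (N:ℝ) = 0 := by linarith
      linarith

lemma SD_chi_simple {α : V} (hα : α ∈ R.simples) : ⟪(SD R).chi, α⟫ = 1 :=
  Classical.choose_spec (exists_chi R) α hα

lemma SD_pos_chi {β : V} (hβ : β ∈ R.pos) :
    ∃ N : ℕ, 1 ≤ N ∧ ⟪(SD R).chi, β⟫ = N :=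
  pos_chi R (Classical.choose_spec (exists_chi R)) hβ

lemma SD_P : (SD R).P = (R.pos : Set V) := by
  ext β
  constructor
  · rintro ⟨hβ, hpos⟩
    rcases R.mem_pos_or_neg_mem_pos β hβ with h | h
    · exact h
    · exfalso
      obtain ⟨N, hN1, hN⟩ := SD_pos_chi R h
      rw [inner_neg_right] at hN
      have h1 : (1:ℝ) ≤ N := by exact_mod_cast hN1
      linarith
  · intro h
    obtain ⟨N, hN1, hN⟩ := SD_pos_chi R h
    refine ⟨R.pos_subset h, ?_⟩
    rw [hN]
    have : (1:ℝ) ≤ N := by exact_mod_cast hN1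
    linarith

lemma SD_Ind : (SD R).Ind = (R.simples : Set V) := by
  classical
  ext β
  constructor
  · rintro ⟨hβP, hnd⟩
    have hβpos : β ∈ R.pos := by
      have h := hβP; rw [SD_P R] at h; exact Finset.mem_coe.mp h
    obtain ⟨N, hN1, hN⟩ := SD_pos_chi R hβpos
    rcases eq_or_lt_of_le hN1 with h1 | h2
    · -- N = 1 : β is simple
      obtain ⟨c, hsupp, hsum⟩ := R.pos_sum_of_simples β hβpos
      have hval : ⟪(SD R).chi, β⟫ = ((∑ a ∈ c.support, c a : ℕ) : ℝ) :=
        (pos_chi_val R (Classical.choose_spec (exists_chi R)) c hsupp hsum)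
      have hsum1 : ∑ a ∈ c.support, c a = 1 := by
        have : ((∑ a ∈ c.support, c a : ℕ) : ℝ) = ((N : ℕ) : ℝ) := by rw [← hval, hN]
        have h0 : ∑ a ∈ c.support, c a = N := by exact_mod_cast this
        omega
      -- support is nonempty
      have hne : c.support.Nonempty := by
        by_contra h
        rw [Finset.not_nonempty_iff_eq_empty] at h
        rw [h] at hsum1
        simp at hsum1
      obtain ⟨a₀, ha₀⟩ := hne
      have hsplit : c a₀ + ∑ a ∈ c.support.erase a₀, c a = 1 := by
        rw [Finset.add_sum_erase _ _ ha₀]; exact hsum1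
      have hca₀ : c a₀ ≠ 0 := Finsupp.mem_support_iff.mp ha₀
      have hca1 : c a₀ = 1 := by omega
      have hrest : ∑ a ∈ c.support.erase a₀, c a = 0 := by omega
      have hallrest : ∀ a ∈ c.support.erase a₀, c a = 0 := Finset.sum_eq_zero_iff.mp hrest
      have hβa₀ : β = a₀ := by
        rw [hsum]
        show ∑ a ∈ c.support, (c a : ℝ) • a = a₀
        rw [← Finset.add_sum_erase _ _ ha₀, hca1]
        rw [Finset.sum_eq_zero (fun a ha => by rw [hallrest a ha]; simp)]
        simp
      rw [hβa₀]
      exact hsupp (Finset.mem_coe.mpr ha₀)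
    · -- N ≥ 2 : β is decomposable, contradiction
      exfalso
      obtain ⟨c, hsupp, hsum⟩ := R.pos_sum_of_simples β hβpos
      have hα : ∃ α ∈ R.simples, 0 < ⟪β, α⟫ := by
        by_contra h
        push_neg at h
        have hs : ⟪β, β⟫ ≤ 0 := by
          nth_rewrite 2 [hsum]
          show ⟪β, ∑ a ∈ c.support, (c a : ℝ) • a⟫ ≤ 0
          rw [inner_sum]
          apply Finset.sum_nonpos
          intro a ha
          rw [real_inner_smul_right]
          have h1 := h a (hsupp (Finset.mem_coe.mpr ha))
          have h2 : (0:ℝ) ≤ (c a : ℝ) := Nat.cast_nonneg _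
          exact mul_nonpos_of_nonneg_of_nonpos h2 h1
        linarith [(SD R).inner_self_pos (show β ∈ (SD R).Phi from hβP.1)]
      obtain ⟨α, hαs, hαpos⟩ := hα
      have hαP : α ∈ (SD R).P := by
        rw [SD_P]; exact Finset.mem_coe.mpr (R.simples_subset hαs)
      have hβα : β ≠ α := by
        intro h
        rw [h] at hN
        rw [SD_chi_simple R hαs] at hN
        have : ((N:ℕ):ℝ) = 1 := hN.symm
        have : N = 1 := by exact_mod_cast this
        omega
      have hβnα : β ≠ -α := by
        intro h
        have := hβP.2
        rw [h, inner_neg_right, SD_chi_simple R hαs] at this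
        linarith
      have hδ : β - α ∈ (SD R).Phi :=
        (SD R).sub_mem hβP.1 (hαP.1) hβα hβnα hαpos
      have hδP : β - α ∈ (SD R).P := by
        refine ⟨hδ, ?_⟩
        rw [inner_sub_right, hN, SD_chi_simple R hαs]
        have : (2:ℝ) ≤ N := by exact_mod_cast h2
        linarith
      exact hnd ⟨α, hαP, β - α, hδP, by abel⟩
  · intro hβ
    refine ⟨by rw [SD_P]; exact Finset.mem_coe.mpr (R.simples_subset hβ), ?_⟩
    rintro ⟨β₁, hβ₁, β₂, hβ₂, heq⟩
    obtain ⟨N₁, hN₁1, hN₁⟩ := SD_pos_chi R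
      (by have h := hβ₁; rw [SD_P R] at h; exact Finset.mem_coe.mp h)
    obtain ⟨N₂, hN₂1, hN₂⟩ := SD_pos_chi R
      (by have h := hβ₂; rw [SD_P R] at h; exact Finset.mem_coe.mp h)
    have h1 : ⟪(SD R).chi, β⟫ = 1 := SD_chi_simple R hβ
    rw [heq, inner_add_right, hN₁, hN₂] at h1
    have e1 : (1:ℝ) ≤ N₁ := by exact_mod_cast hN₁1
    have e2 : (1:ℝ) ≤ N₂ := by exact_mod_cast hN₂1
    linarith

/-- the long roots as a `Sys` -/
noncomputable def SL : Sys V where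
  Phi := longRoots R
  chi := (SD R).chi
  fin := (R.roots.finite_toSet).subset (fun β hβ => Finset.mem_coe.mpr hβ.1)
  zero_not_mem := fun h => R.zero_not_mem h.1
  refl_mem := fun β hβ γ hγ => by
    refine ⟨?_, ?_⟩
    · have := (SD R).refl_mem β (Finset.mem_coe.mpr hβ.1) γ (Finset.mem_coe.mpr hγ.1)
      exact Finset.mem_coe.mp this
    · intro δ hδ
      rw [LinearIsometryEquiv.norm_map]
      exact hγ.2 δ hδ
  reduced := fun β hβ t ht => R.reduced β hβ.1 t ht.1
  cry := fun β hβ γ hγ => R.crystallographic β hβ.1 γ hγ.1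
  generic := fun β hβ => (SD R).generic β (Finset.mem_coe.mpr hβ.1)

lemma mem_SL_P {β : V} : β ∈ (SL R).P ↔ β ∈ longRoots R ∧ β ∈ R.pos := by
  constructor
  · rintro ⟨h1, h2⟩
    refine ⟨h1, ?_⟩
    have : β ∈ (SD R).P := ⟨Finset.mem_coe.mpr h1.1, h2⟩
    rw [SD_P R] at this
    exact Finset.mem_coe.mp this
  · rintro ⟨h1, h2⟩
    refine ⟨h1, ?_⟩
    have : β ∈ (SD R).P := by rw [SD_P R]; exact Finset.mem_coe.mpr h2
    exact this.2

lemma weyl_maps_roots {w : V ≃ₗᵢ[ℝ] V} (hw : w ∈ R.weyl) :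
    (∀ β ∈ R.roots, w β ∈ R.roots) ∧ (∀ β ∈ R.roots, w⁻¹ β ∈ R.roots) := by
  induction hw using Subgroup.closure_induction with
  | mem g hg =>
      obtain ⟨β, hβ, rfl⟩ := mem_rfOn.mp hg
      have key : ∀ γ ∈ R.roots, rf β γ ∈ R.roots := by
        intro γ hγ
        have := R.reflect_mem β (Finset.mem_coe.mp hβ) γ hγ
        rwa [← rf_apply'] at this
      exact ⟨key, by rw [rf_inv]; exact key⟩
  | one => exact ⟨fun β hβ => by simpa using hβ, fun β hβ => by simpa using hβ⟩
  | mul x y hx hy ihx ihy =>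
      constructor
      · intro β hβ
        have h : (x * y) β = x (y β) := rfl
        rw [h]
        exact ihx.1 _ (ihy.1 β hβ)
      · intro β hβ
        have h : (x * y)⁻¹ β = y⁻¹ (x⁻¹ β) := by rw [mul_inv_rev]; rfl
        rw [h]
        exact ihy.2 _ (ihx.2 β hβ)
  | inv x hx ihx =>
      exact ⟨ihx.2, fun β hβ => by rw [inv_inv]; exact ihx.1 β hβ⟩

lemma weyl_long {w : V ≃ₗᵢ[ℝ] V} (hw : w ∈ R.weyl) {β : V} (hβ : β ∈ longRoots R) :
    w β ∈ longRoots R := by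
  refine ⟨(weyl_maps_roots R hw).1 β hβ.1, ?_⟩
  intro γ hγ
  have h1 : w (w⁻¹ γ) = γ := by
    have h : (w * w⁻¹) γ = γ := by rw [mul_inv_cancel]; rfl
    exact h
  calc ‖γ‖ = ‖w (w⁻¹ γ)‖ := by rw [h1]
    _ = ‖w⁻¹ γ‖ := LinearIsometryEquiv.norm_map w _
    _ ≤ ‖β‖ := hβ.2 _ ((weyl_maps_roots R hw).2 γ hγ)
    _ = ‖w β‖ := (LinearIsometryEquiv.norm_map w β).symm

lemma normal_conj {w : V ≃ₗᵢ[ℝ] V} (hw : w ∈ R.weyl) {u : V ≃ₗᵢ[ℝ] V}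
    (hu : u ∈ reflectionSubgroup (longRoots R)) :
    w * u * w⁻¹ ∈ reflectionSubgroup (longRoots R) := by
  induction hu using Subgroup.closure_induction with
  | mem g hg =>
      obtain ⟨β, hβ, rfl⟩ := mem_rfOn.mp hg
      rw [conj_rf]
      exact Subgroup.subset_closure (rf_mem_rfOn (weyl_long R hw hβ))
  | one =>
      have h : w * 1 * w⁻¹ = 1 := by group
      rw [h]; exact one_mem _
  | mul x y hx hy ihx ihy =>
      have h : w * (x * y) * w⁻¹ = (w * x * w⁻¹) * (w * y * w⁻¹) := by group
      rw [h]; exact mul_mem ihx ihy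
  | inv x hx ihx =>
      have h : w * x⁻¹ * w⁻¹ = (w * x * w⁻¹)⁻¹ := by group
      rw [h]; exact inv_mem ihx

lemma ws_short {w : V ≃ₗᵢ[ℝ] V} (hw : w ∈ reflectionSubgroup (shortSimples R)) :
    (∀ β ∈ (SL R).P, w β ∈ (SL R).P) ∧ (∀ β ∈ (SL R).P, w⁻¹ β ∈ (SL R).P) := by
  induction hw using Subgroup.closure_induction with
  | mem g hg =>
      obtain ⟨α, hα, rfl⟩ := mem_rfOn.mp hg
      have key : ∀ β ∈ (SL R).P, rf α β ∈ (SL R).P := by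
        intro β hβ
        obtain ⟨hβlong, hβpos⟩ := (mem_SL_P R).mp hβ
        have hβSD : β ∈ (SD R).P := by rw [SD_P R]; exact Finset.mem_coe.mpr hβpos
        have hαInd : α ∈ (SD R).Ind := by rw [SD_Ind]; exact Finset.mem_coe.mpr hα.1
        have hβα : β ≠ α := fun h => hα.2 (h ▸ hβlong)
        have h1 : rf α β ∈ (SD R).P := (SD R).key_perm hαInd hβSD hβα
        rw [mem_SL_P]
        have h1' := h1
        rw [SD_P R] at h1'
        refine ⟨⟨Finset.mem_coe.mp h1.1, fun δ hδ => ?_⟩, Finset.mem_coe.mp h1'⟩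
        rw [LinearIsometryEquiv.norm_map]
        exact hβlong.2 δ hδ
      exact ⟨key, by rw [rf_inv]; exact key⟩
  | one => exact ⟨fun β hβ => by simpa using hβ, fun β hβ => by simpa using hβ⟩
  | mul x y hx hy ihx ihy =>
      constructor
      · intro β hβ
        have h : (x * y) β = x (y β) := rfl
        rw [h]
        exact ihx.1 _ (ihy.1 β hβ)
      · intro β hβ
        have h : (x * y)⁻¹ β = y⁻¹ (x⁻¹ β) := by rw [mul_inv_rev]; rfl
        rw [h]
        exact ihy.2 _ (ihx.2 β hβ)
  | inv x hx ihx =>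
      exact ⟨ihx.2, fun β hβ => by rw [inv_inv]; exact ihx.1 β hβ⟩

lemma part3 : reflectionSubgroup (shortSimples R) ⊓ reflectionSubgroup (longRoots R) = ⊥ := by
  rw [eq_bot_iff]
  intro w hw
  rw [Subgroup.mem_inf] at hw
  have h1 : w = 1 := (SL R).fix_P_eq_one hw.2 (ws_short R hw.1).1
  rw [h1]
  exact Subgroup.one_mem ⊥

lemma weyl_eq_simples : R.weyl = Subgroup.closure (rfOn ((R.simples : Set V))) := by
  have h1 : R.weyl = Subgroup.closure (rfOn (SD R).Phi) := rfl
  rw [h1, (SD R).closure_eq, SD_Ind]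

lemma ws_le_weyl : reflectionSubgroup (shortSimples R) ≤ R.weyl :=
  Subgroup.closure_mono (rfOn_mono
    (fun α hα => Finset.mem_coe.mpr (R.pos_subset (R.simples_subset hα.1))))

lemma part4 : ∀ w ∈ R.weyl, ∃ s ∈ reflectionSubgroup (shortSimples R),
    ∃ u ∈ reflectionSubgroup (longRoots R), w = s * u := by
  intro w hw
  rw [weyl_eq_simples] at hw
  induction hw using Subgroup.closure_induction with
  | mem g hg =>
      obtain ⟨α, hα, rfl⟩ := mem_rfOn.mp hg
      have hαs : α ∈ R.simples := Finset.mem_coe.mp hα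
      by_cases hlong : α ∈ longRoots R
      · exact ⟨1, one_mem _, rf α, Subgroup.subset_closure (rf_mem_rfOn hlong),
          (one_mul _).symm⟩
      · exact ⟨rf α, Subgroup.subset_closure (rf_mem_rfOn ⟨hαs, hlong⟩), 1, one_mem _,
          (mul_one _).symm⟩
  | one => exact ⟨1, one_mem _, 1, one_mem _, by simp⟩
  | mul x y hx hy ihx ihy =>
      obtain ⟨s1, hs1, u1, hu1, rfl⟩ := ihx
      obtain ⟨s2, hs2, u2, hu2, rfl⟩ := ihy
      refine ⟨s1 * s2, mul_mem hs1 hs2, (s2⁻¹ * u1 * s2) * u2, mul_mem ?_ hu2, by group⟩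
      have h := normal_conj R (inv_mem (ws_le_weyl R hs2)) hu1
      rwa [inv_inv] at h
  | inv x hx ihx =>
      obtain ⟨s, hs, u, hu, rfl⟩ := ihx
      exact ⟨s⁻¹, inv_mem hs, s * u⁻¹ * s⁻¹,
        normal_conj R (ws_le_weyl R hs) (inv_mem hu), by group⟩

end Glue

end Stmt15

/-- For an irreducible root system with two root lengths, `W` is the internal
semidirect product `W_s ⋉ W(Δ_l)`: `W(Δ_l) ≤ W` is normal in `W`,
`W_s ∩ W(Δ_l) = {1}` and `W = W_s · W(Δ_l)`. -/
theorem statement15 {V : Type} [NormedAddCommGroup V] [InnerProductSpace ℝ V]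
    [FiniteDimensional ℝ V] (R : RootSystemData V)
    (hirr : R.IsIrreducible)
    (htwo : ∃ α ∈ R.roots, ∃ β ∈ R.roots, ‖α‖ ≠ ‖β‖) :
    reflectionSubgroup (longRoots R) ≤ R.weyl ∧
    (∀ w ∈ R.weyl, ∀ u ∈ reflectionSubgroup (longRoots R),
      w * u * w⁻¹ ∈ reflectionSubgroup (longRoots R)) ∧
    reflectionSubgroup (shortSimples R) ⊓ reflectionSubgroup (longRoots R) = ⊥ ∧
    (∀ w ∈ R.weyl, ∃ s ∈ reflectionSubgroup (shortSimples R),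
      ∃ u ∈ reflectionSubgroup (longRoots R), w = s * u) := by
  refine ⟨?_, fun w hw u hu => Stmt15.normal_conj R hw hu, Stmt15.part3 R, Stmt15.part4 R⟩
  exact Subgroup.closure_mono (Stmt15.rfOn_mono (fun β hβ => Finset.mem_coe.mpr hβ.1))
end
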